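/- For every real number φ with 1 < φ < 3/2 and every γ ≥ 0, the quantity G(β, γ, φ, n) := g(β, n)·M(γ, φ, n) + W(γ, φ, n) satisfies: for β = 1, G = Θ(n^{3/2}/√(log n)) if γ > 5/2−φ; Θ(n^{3/2}·√(log n)) if γ = 5/2−φ; Θ(n^{4−γ−φ}) if 1 < γ < 5/2−φ; Θ(n^{3−φ}/log n) if γ = 1; and Θ(n^{3−φ}) if 0 ≤ γ < 1; for 0 ≤ β < 1, G = Θ(n^{3/2}) if γ > 5/2−φ; Θ(n^{3/2}·log n) if γ = 5/2−φ; Θ(n^{4−γ−φ}) if 1 < γ < 5/2−φ; Θ(n^{3−φ}/log n) if γ = 1; and Θ(n^{3−φ}) if 0 ≤ γ < 1. -/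

import Mathlib

/-- `f(n) = Θ(h(n))`: there exist constants `0 < c₁ ≤ c₂` and `N₀` such that
`c₁·h(n) ≤ f(n) ≤ c₂·h(n)` for all integers `n ≥ N₀`. -/
def IsBigTheta (f h : ℕ → ℝ) : Prop :=
  ∃ c₁ c₂ : ℝ, 0 < c₁ ∧ c₁ ≤ c₂ ∧ ∃ N₀ : ℕ, ∀ n : ℕ, N₀ ≤ n →
    c₁ * h n ≤ f n ∧ f n ≤ c₂ * h n

/-- Zipf normalization `Z(γ, n) = Σ_{j=1}^{n−1} j^{−γ}`. -/
noncomputable def Z (γ : ℝ) (n : ℕ) : ℝ := ∑ j ∈ Finset.Icc 1 (n - 1), (j : ℝ) ^ (-γ)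

/-- `Z_φ(l) = Σ_{m=1}^{l} m^{−φ}`. -/
noncomputable def Zphi (φ : ℝ) (l : ℕ) : ℝ := ∑ m ∈ Finset.Icc 1 l, (m : ℝ) ^ (-φ)

/-- `D₁(φ, l) = Z_φ(l)⁻¹·Σ_{d=1}^{l} d^{1−φ}`. -/
noncomputable def D1 (φ : ℝ) (l : ℕ) : ℝ :=
  (Zphi φ l)⁻¹ * ∑ d ∈ Finset.Icc 1 l, (d : ℝ) ^ (1 - φ)

/-- `D_{1/2}(φ, l) = Z_φ(l)⁻¹·Σ_{d=1}^{l} d^{1/2−φ}`. -/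
noncomputable def Dhalf (φ : ℝ) (l : ℕ) : ℝ :=
  (Zphi φ l)⁻¹ * ∑ d ∈ Finset.Icc 1 l, (d : ℝ) ^ (1 / 2 - φ)

/-- `W(γ, φ, n) = n·Z(γ, n)⁻¹·Σ_{l=1}^{n−1} l^{−γ}·D₁(φ, l)`. -/
noncomputable def W (γ φ : ℝ) (n : ℕ) : ℝ :=
  n * (Z γ n)⁻¹ * ∑ l ∈ Finset.Icc 1 (n - 1), (l : ℝ) ^ (-γ) * D1 φ l

/-- `M(γ, φ, n) = n·Z(γ, n)⁻¹·Σ_{l=1}^{n−1} l^{−γ}·D_{1/2}(φ, l)`. -/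
noncomputable def M (γ φ : ℝ) (n : ℕ) : ℝ :=
  n * (Z γ n)⁻¹ * ∑ l ∈ Finset.Icc 1 (n - 1), (l : ℝ) ^ (-γ) * Dhalf φ l

/-- `g(β, n)`: `1` if `β > 2`; `log n` if `β = 2`; `n^{1−β/2}` if `1 < β < 2`;
`√(n/log n)` if `β = 1`; `√n` if `0 ≤ β < 1`. -/
noncomputable def g (β : ℝ) (n : ℕ) : ℝ :=
  if 2 < β then 1
  else if β = 2 then Real.log n
  else if 1 < β then (n : ℝ) ^ (1 - β / 2)
  else if β = 1 then Real.sqrt ((n : ℝ) / Real.log n)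
  else Real.sqrt n

/-- `G(β, γ, φ, n) = g(β, n)·M(γ, φ, n) + W(γ, φ, n)`, the deterministic core of the
transport-complexity lower bound for social-multicast. -/
noncomputable def G (β γ φ : ℝ) (n : ℕ) : ℝ := g β n * M γ φ n + W γ φ n


section AUX1
open Real Finset


-- A1: for x ≥ 1, 0 < q ≤ 1:  q * x^(q-1) ≤ x^q - (x-1)^q
lemma claimA1 {x q : ℝ} (hx : 1 ≤ x) (hq0 : 0 < q) (hq1 : q ≤ 1) :
    q * x ^ (q - 1) ≤ x ^ q - (x - 1) ^ q := by
  have hx0 : 0 < x := lt_of_lt_of_le one_pos hx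
  have hs : -1 ≤ -(1 / x) := by
    rw [neg_le_neg_iff]
    exact div_le_one_of_le₀ hx (by positivity)
  have hb := rpow_one_add_le_one_add_mul_self hs hq0.le hq1
  have h1 : (1 + -(1/x)) = (x - 1) / x := by
    field_simp
    ring
  have h2 : (x - 1) ^ q = x ^ q * ((x - 1) / x) ^ q := by
    rw [← Real.mul_rpow hx0.le (by
      apply div_nonneg (by linarith) hx0.le)]
    congr 1; field_simp
  have h3 : x ^ q * (1 + q * -(1/x)) = x ^ q - q * x ^ (q - 1) := by
    rw [Real.rpow_sub_one hx0.ne']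
    field_simp
    ring
  calc q * x ^ (q-1) = x ^ q - x ^ q * (1 + q * -(1/x)) := by rw [h3]; ring
    _ ≤ x ^ q - (x-1) ^ q := by
        have := mul_le_mul_of_nonneg_left hb (Real.rpow_nonneg hx0.le q)
        rw [h1] at this
        linarith [h2 ▸ this]

-- A2: x ≥ 1, 0 < q ≤ 1: (x+1)^q - x^q ≤ q * x^(q-1)
lemma claimA2 {x q : ℝ} (hx : 1 ≤ x) (hq0 : 0 < q) (hq1 : q ≤ 1) :
    (x + 1) ^ q - x ^ q ≤ q * x ^ (q - 1) := by
  have hx0 : 0 < x := lt_of_lt_of_le one_pos hx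
  have hs : (-1:ℝ) ≤ 1 / x := by
    have : (0:ℝ) < 1/x := by positivity
    linarith
  have hb := rpow_one_add_le_one_add_mul_self hs hq0.le hq1
  have h2 : (x + 1) ^ q = x ^ q * (1 + 1 / x) ^ q := by
    rw [← Real.mul_rpow hx0.le (by positivity)]
    congr 1; field_simp
  have h3 : x ^ q * (1 + q * (1/x)) = x ^ q + q * x ^ (q - 1) := by
    rw [Real.rpow_sub_one hx0.ne']
    field_simp
  have := mul_le_mul_of_nonneg_left hb (Real.rpow_nonneg hx0.le q)
  rw [← h2] at this
  linarith [h3 ▸ this]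

-- A3: x ≥ 1, 1 ≤ q: q * x^(q-1) ≤ (x+1)^q - x^q
lemma claimA3 {x q : ℝ} (hx : 1 ≤ x) (hq : 1 ≤ q) :
    q * x ^ (q - 1) ≤ (x + 1) ^ q - x ^ q := by
  have hx0 : 0 < x := lt_of_lt_of_le one_pos hx
  have hs : (-1:ℝ) ≤ 1 / x := by
    have : (0:ℝ) < 1/x := by positivity
    linarith
  have hb := one_add_mul_self_le_rpow_one_add hs hq
  have h2 : (x + 1) ^ q = x ^ q * (1 + 1 / x) ^ q := by
    rw [← Real.mul_rpow hx0.le (by positivity)]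
    congr 1; field_simp
  have h3 : x ^ q * (1 + q * (1/x)) = x ^ q + q * x ^ (q - 1) := by
    rw [Real.rpow_sub_one hx0.ne']
    field_simp
  have := mul_le_mul_of_nonneg_left hb (Real.rpow_nonneg hx0.le q)
  rw [← h2] at this
  linarith [h3 ▸ this]

-- A4: x ≥ 1, 1 ≤ q: x^q - (x-1)^q ≤ q * x^(q-1)
lemma claimA4 {x q : ℝ} (hx : 1 ≤ x) (hq : 1 ≤ q) :
    x ^ q - (x - 1) ^ q ≤ q * x ^ (q - 1) := by
  have hx0 : 0 < x := lt_of_lt_of_le one_pos hx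
  have hs : -1 ≤ -(1 / x) := by
    rw [neg_le_neg_iff]
    exact div_le_one_of_le₀ hx (by positivity)
  have hb := one_add_mul_self_le_rpow_one_add hs hq
  have h1 : (1 + -(1/x)) = (x - 1) / x := by
    field_simp
    ring
  have h2 : (x - 1) ^ q = x ^ q * ((x - 1) / x) ^ q := by
    rw [← Real.mul_rpow hx0.le (by
      apply div_nonneg (by linarith) hx0.le)]
    congr 1; field_simp
  have h3 : x ^ q * (1 + q * -(1/x)) = x ^ q - q * x ^ (q - 1) := by
    rw [Real.rpow_sub_one hx0.ne']
    field_simp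
    ring
  have := mul_le_mul_of_nonneg_left hb (Real.rpow_nonneg hx0.le q)
  rw [h1] at this
  linarith [h2 ▸ this, h3]

-- A5: x ≥ 2, q < 0: (-q) * x^(q-1) ≤ (x-1)^q - x^q
lemma claimA5 {x q : ℝ} (hx : 2 ≤ x) (hq : q < 0) :
    (-q) * x ^ (q - 1) ≤ (x - 1) ^ q - x ^ q := by
  have hx0 : 0 < x := lt_of_lt_of_le two_pos hx
  set m : ℝ := -q with hm
  have hm0 : 0 < m := by simpa [hm] using hq
  have hy0 : 0 < 1 - 1/x := by
    have : 1/x ≤ 1/2 := by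
      apply div_le_div_of_nonneg_left one_pos.le two_pos hx  -- maybe wrong name
    linarith
  -- key: (1 + m/x) * (1 - 1/x)^m ≤ 1
  have key : (1 + m/x) * (1 - 1/x) ^ m ≤ 1 := by
    rcases le_or_gt m 1 with hm1 | hm1
    · have hs : -1 ≤ -(1/x) := by
        have : 1/x ≤ 1 := by
          apply div_le_one_of_le₀ (by linarith) hx0.le
        linarith
      have hb : (1 + -(1/x)) ^ m ≤ 1 + m * -(1/x) :=
        rpow_one_add_le_one_add_mul_self hs hm0.le hm1
      have h4 : (1:ℝ) + -(1/x) = 1 - 1/x := by ring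
      rw [h4] at hb
      have h5 : (1 + m/x) * (1 - m/x) ≤ 1 := by
        have : 0 ≤ (m/x)^2 := sq_nonneg _
        nlinarith
      have hb' : (1 - 1/x) ^ m ≤ 1 - m/x := by
        rw [show (1:ℝ) + m * -(1/x) = 1 - m/x by ring] at hb
        exact hb
      have h6 : (1 + m/x) * (1 - 1/x) ^ m ≤ (1 + m/x) * (1 - m/x) :=
        mul_le_mul_of_nonneg_left hb' (by positivity)
      linarith
    · have hs : (-1:ℝ) ≤ 1/x := by
        have : (0:ℝ) < 1/x := by positivity
        linarith
      have hb : 1 + m * (1/x) ≤ (1 + 1/x) ^ m :=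
        one_add_mul_self_le_rpow_one_add hs hm1.le
      have hb' : 1 + m/x ≤ (1 + 1/x) ^ m := by
        rw [show (1:ℝ) + m * (1/x) = 1 + m/x by ring] at hb
        exact hb
      have h6 : (1 + m/x) * (1 - 1/x) ^ m ≤ (1 + 1/x) ^ m * (1 - 1/x) ^ m :=
        mul_le_mul_of_nonneg_right hb' (Real.rpow_nonneg hy0.le m)
      have h7 : (1 + 1/x) ^ m * (1 - 1/x) ^ m = ((1 + 1/x) * (1 - 1/x)) ^ m := by
        rw [← Real.mul_rpow (by positivity) hy0.le]
      have h8 : ((1 + 1/x) * (1 - 1/x)) ^ m ≤ 1 := by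
        apply Real.rpow_le_one (by nlinarith [sq_nonneg (1/x)]) (by nlinarith [sq_nonneg (1/x)]) hm0.le
      rw [h7] at h6
      linarith
  -- now derive the claim
  have h2 : (x - 1) ^ q = x ^ q * (1 - 1/x) ^ q := by
    rw [← Real.mul_rpow hx0.le hy0.le]
    congr 1; field_simp
  have hinv : (1 - 1/x) ^ q = ((1 - 1/x) ^ m)⁻¹ := by
    rw [hm, Real.rpow_neg hy0.le, inv_inv]
  have hpm : 0 < (1 - 1/x) ^ m := Real.rpow_pos_of_pos hy0 m
  have key2 : 1 + m/x ≤ ((1 - 1/x) ^ m)⁻¹ := by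
    rw [inv_eq_one_div, le_div_iff₀ hpm]
    exact key
  have final : x ^ q * (1 + m/x) ≤ (x - 1) ^ q := by
    rw [h2, hinv]
    calc x ^ q * (1 + m/x) ≤ x ^ q * ((1 - 1/x) ^ m)⁻¹ :=
          mul_le_mul_of_nonneg_left key2 (Real.rpow_nonneg hx0.le q)
      _ = x ^ q * ((1 - 1/x) ^ m)⁻¹ := rfl
  have h3 : x ^ q * (1 + m/x) = x ^ q + m * x ^ (q - 1) := by
    rw [Real.rpow_sub_one hx0.ne']
    field_simp
  linarith [h3 ▸ final]

noncomputable def S (p : ℝ) (l : ℕ) : ℝ := ∑ d ∈ Finset.Icc 1 l, (d : ℝ) ^ p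

lemma S_zero (p : ℝ) : S p 0 = 0 := by simp [S]

lemma S_succ (p : ℝ) (l : ℕ) : S p (l + 1) = S p l + ((l:ℝ) + 1) ^ p := by
  unfold S
  rw [Finset.sum_Icc_succ_top (Nat.le_add_left 1 l)]
  push_cast
  ring_nf

lemma S_nonneg (p : ℝ) (l : ℕ) : 0 ≤ S p l := by
  apply Finset.sum_nonneg
  intro d _
  positivity

lemma one_le_S (p : ℝ) {l : ℕ} (hl : 1 ≤ l) : 1 ≤ S p l := by
  unfold S
  have h1 : (1:ℕ) ∈ Finset.Icc 1 l := by simp [hl]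
  calc (1:ℝ) = ((1:ℕ):ℝ) ^ p := by simp
    _ ≤ ∑ d ∈ Finset.Icc 1 l, (d : ℝ) ^ p := by
        apply Finset.single_le_sum (f := fun d : ℕ => (d:ℝ) ^ p) _ h1
        intro i _
        positivity

lemma S_mono_exp {p p' : ℝ} (h : p ≤ p') (l : ℕ) : S p l ≤ S p' l := by
  apply Finset.sum_le_sum
  intro d hd
  simp only [Finset.mem_Icc] at hd
  exact Real.rpow_le_rpow_of_exponent_le (by exact_mod_cast hd.1) h
-- B1: p ∈ (-1,0]: S p l ≤ l^(p+1)/(p+1)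
lemma S_upper_mid {p : ℝ} (hp : -1 < p) (hp0 : p ≤ 0) (l : ℕ) :
    S p l ≤ (l:ℝ) ^ (p + 1) / (p + 1) := by
  have hq0 : 0 < p + 1 := by linarith
  induction l with
  | zero => simp [S_zero, Real.zero_rpow hq0.ne']
  | succ l ih =>
    rw [S_succ]
    have hx : (1:ℝ) ≤ (l:ℝ) + 1 := by
      have : (0:ℝ) ≤ (l:ℝ) := Nat.cast_nonneg l
      linarith
    have hA := claimA1 (x := (l:ℝ) + 1) (q := p + 1) hx hq0 (by linarith)
    rw [show (l:ℝ) + 1 - 1 = (l:ℝ) by ring, show p + 1 - 1 = p by ring] at hA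
    push_cast
    rw [le_div_iff₀ hq0] at ih ⊢
    nlinarith

-- B2: p ∈ (-1,0]: (l+1)^(p+1) ≤ (p+1) * S p l + 1
lemma S_lower_mid_aux {p : ℝ} (hp : -1 < p) (hp0 : p ≤ 0) (l : ℕ) :
    ((l:ℝ) + 1) ^ (p + 1) ≤ (p + 1) * S p l + 1 := by
  have hq0 : 0 < p + 1 := by linarith
  induction l with
  | zero => simp [S_zero]
  | succ l ih =>
    rw [S_succ]
    have hx : (1:ℝ) ≤ (l:ℝ) + 1 := by
      have : (0:ℝ) ≤ (l:ℝ) := Nat.cast_nonneg l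
      linarith
    have hA := claimA2 (x := (l:ℝ) + 1) (q := p + 1) hx hq0 (by linarith)
    rw [show p + 1 - 1 = p by ring] at hA
    push_cast
    nlinarith

-- combined lower for p ∈ (-1,0], l ≥ 1: l^(p+1)/(p+2) ≤ S p l
lemma S_lower_mid {p : ℝ} (hp : -1 < p) (hp0 : p ≤ 0) {l : ℕ} (hl : 1 ≤ l) :
    (l:ℝ) ^ (p + 1) / (p + 2) ≤ S p l := by
  have hq0 : 0 < p + 1 := by linarith
  have h1 := S_lower_mid_aux hp hp0 l
  have h2 : (l:ℝ) ^ (p+1) ≤ ((l:ℝ) + 1) ^ (p+1) :=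
    Real.rpow_le_rpow (by positivity) (by linarith) hq0.le
  have h3 := one_le_S p hl
  rw [div_le_iff₀ (by linarith)]
  nlinarith

-- B3: p ∈ [0,1): S p l ≤ 4 * l^(p+1)  (for all l)
lemma S_upper_hi_aux {p : ℝ} (hp0 : 0 ≤ p) (l : ℕ) :
    (p + 1) * S p l ≤ ((l:ℝ) + 1) ^ (p + 1) - 1 := by
  have hq1 : 1 ≤ p + 1 := by linarith
  induction l with
  | zero => simp [S_zero]
  | succ l ih =>
    rw [S_succ]
    have hx : (1:ℝ) ≤ (l:ℝ) + 1 := by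
      have : (0:ℝ) ≤ (l:ℝ) := Nat.cast_nonneg l
      linarith
    have hA := claimA3 (x := (l:ℝ) + 1) (q := p + 1) hx hq1
    rw [show p + 1 - 1 = p by ring] at hA
    push_cast
    nlinarith

lemma S_upper_hi {p : ℝ} (hp0 : 0 ≤ p) (hp1 : p < 1) {l : ℕ} (hl : 1 ≤ l) :
    S p l ≤ 4 * (l:ℝ) ^ (p + 1) := by
  have hq1 : (1:ℝ) ≤ p + 1 := by linarith
  have h1 := S_upper_hi_aux hp0 l
  have hl1 : (1:ℝ) ≤ (l:ℝ) := by exact_mod_cast hl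
  have h2 : ((l:ℝ) + 1) ^ (p + 1) ≤ (2 * l) ^ (p + 1) :=
    Real.rpow_le_rpow (by positivity) (by linarith) (by linarith)
  have h3 : ((2:ℝ) * l) ^ (p + 1) = 2 ^ (p+1) * (l:ℝ) ^ (p+1) :=
    Real.mul_rpow (by norm_num) (by positivity)
  have h4 : (2:ℝ) ^ (p+1) ≤ 2 ^ (2:ℝ) :=
    Real.rpow_le_rpow_of_exponent_le (by norm_num) (by linarith)
  have h5 : (2:ℝ) ^ (2:ℝ) = 4 := by
    rw [show (2:ℝ) = ((2:ℕ):ℝ) by norm_num, Real.rpow_natCast]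
    norm_num
  have h6 : 0 ≤ (l:ℝ) ^ (p+1) := Real.rpow_nonneg (by positivity) _
  nlinarith

-- B4: p ≥ 0: l^(p+1) ≤ (p+1) * S p l
lemma S_lower_hi_aux {p : ℝ} (hp0 : 0 ≤ p) (l : ℕ) :
    (l:ℝ) ^ (p + 1) ≤ (p + 1) * S p l := by
  have hq1 : (1:ℝ) ≤ p + 1 := by linarith
  induction l with
  | zero => simp [S_zero, Real.zero_rpow (show p+1 ≠ 0 by linarith)]
  | succ l ih =>
    rw [S_succ]
    have hx : (1:ℝ) ≤ (l:ℝ) + 1 := by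
      have : (0:ℝ) ≤ (l:ℝ) := Nat.cast_nonneg l
      linarith
    have hA := claimA4 (x := (l:ℝ) + 1) (q := p + 1) hx hq1
    rw [show (l:ℝ) + 1 - 1 = (l:ℝ) by ring, show p + 1 - 1 = p by ring] at hA
    push_cast
    nlinarith

-- unified: p ∈ (-1,1), l ≥ 1
lemma S_lower {p : ℝ} (hp : -1 < p) (hp1 : p < 1) {l : ℕ} (hl : 1 ≤ l) :
    (l:ℝ) ^ (p + 1) / (p + 2) ≤ S p l := by
  rcases le_or_gt p 0 with h | h
  · exact S_lower_mid hp h hl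
  · have := S_lower_hi_aux h.le l
    rw [div_le_iff₀ (by linarith)]
    have := S_nonneg p l
    nlinarith

lemma S_upper {p : ℝ} (hp : -1 < p) (hp1 : p < 1) {l : ℕ} (hl : 1 ≤ l) :
    S p l ≤ (1 / (p + 1) + 4) * (l:ℝ) ^ (p + 1) := by
  have h6 : 0 ≤ (l:ℝ) ^ (p+1) := Real.rpow_nonneg (by positivity) _
  rcases le_or_gt p 0 with h | h
  · have := S_upper_mid hp h l
    have hq0 : 0 < p + 1 := by linarith
    rw [div_eq_mul_inv] at this
    calc S p l ≤ (l:ℝ) ^ (p+1) * (p+1)⁻¹ := this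
      _ ≤ (1/(p+1) + 4) * (l:ℝ) ^ (p+1) := by
          rw [one_div]
          nlinarith
  · have h7 := S_upper_hi h.le hp1 hl
    have h8 : 0 < 1/(p+1) := by positivity
    nlinarith

-- B5: p < -1: S p l ≤ 1 + 1/(-1-p)
lemma S_upper_conv_aux {p : ℝ} (hp : p < -1) {l : ℕ} (hl : 1 ≤ l) :
    S p l ≤ 1 + (1 - (l:ℝ) ^ (p + 1)) / (-(p + 1)) := by
  have hq0 : 0 < -(p + 1) := by linarith
  induction l with
  | zero => omega
  | succ l ih =>
    rcases Nat.eq_or_lt_of_le hl with h1 | h1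
    · have : l = 0 := by omega
      subst this
      simp [S_succ, S_zero, Real.one_rpow]
    · have hl' : 1 ≤ l := by omega
      have ih' := ih hl'
      rw [S_succ]
      have hx : (2:ℝ) ≤ (l:ℝ) + 1 := by
        have : (1:ℝ) ≤ (l:ℝ) := by exact_mod_cast hl'
        linarith
      have hA := claimA5 (x := (l:ℝ) + 1) (q := p + 1) hx (by linarith)
      rw [show (l:ℝ) + 1 - 1 = (l:ℝ) by ring, show p + 1 - 1 = p by ring] at hA
      push_cast
      have hstep : ((l:ℝ)+1) ^ p ≤ ((l:ℝ) ^ (p+1) - ((l:ℝ)+1) ^ (p+1)) / (-(p+1)) := by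
        rw [le_div_iff₀ hq0]
        linarith
      have hid : (1 - (l:ℝ)^(p+1)) / (-(p+1)) + ((l:ℝ)^(p+1) - ((l:ℝ)+1)^(p+1)) / (-(p+1))
          = (1 - ((l:ℝ)+1)^(p+1)) / (-(p+1)) := by
        rw [← add_div]
        ring_nf
      linarith

lemma S_upper_conv {p : ℝ} (hp : p < -1) (l : ℕ) :
    S p l ≤ 1 + 1 / (-(p + 1)) := by
  have hq0 : 0 < -(p + 1) := by linarith
  rcases Nat.eq_zero_or_pos l with rfl | hl
  · rw [S_zero]; positivity
  · have h1 := S_upper_conv_aux hp hl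
    have h2 : 0 < (l:ℝ) ^ (p+1) := Real.rpow_pos_of_pos (by exact_mod_cast hl) _
    calc S p l ≤ 1 + (1 - (l:ℝ) ^ (p + 1)) / (-(p + 1)) := h1
      _ ≤ 1 + 1 / (-(p + 1)) := by
          gcongr
          linarith
lemma S_harm_lower (l : ℕ) : Real.log ((l:ℝ) + 1) ≤ S (-1 : ℝ) l := by
  induction l with
  | zero => simp [S_zero]
  | succ l ih =>
    rw [S_succ]
    have hl0 : (0:ℝ) < (l:ℝ) + 1 := by positivity
    have hstep : Real.log ((l:ℝ) + 2) - Real.log ((l:ℝ) + 1) ≤ 1 / ((l:ℝ) + 1) := by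
      rw [← Real.log_div (by positivity) (by positivity)]
      have := Real.log_le_sub_one_of_pos (show (0:ℝ) < ((l:ℝ)+2)/((l:ℝ)+1) by positivity)
      have heq : ((l:ℝ)+2)/((l:ℝ)+1) - 1 = 1/((l:ℝ)+1) := by
        field_simp
        ring
      linarith
    have hterm : ((l:ℝ) + 1) ^ (-1:ℝ) = 1 / ((l:ℝ) + 1) := by
      rw [Real.rpow_neg_one]
      rw [one_div]
    push_cast
    rw [hterm]
    have : ((l:ℝ) + 1 + 1) = (l:ℝ) + 2 := by ring
    rw [this]
    linarith

lemma S_harm_upper {l : ℕ} (hl : 1 ≤ l) : S (-1 : ℝ) l ≤ 1 + Real.log l := by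
  induction l with
  | zero => omega
  | succ l ih =>
    rcases Nat.eq_or_lt_of_le hl with h1 | h1
    · have : l = 0 := by omega
      subst this
      simp [S_succ, S_zero, Real.one_rpow]
    · have hl' : 1 ≤ l := by omega
      have ih' := ih hl'
      rw [S_succ]
      have hl0 : (0:ℝ) < (l:ℝ) := by exact_mod_cast hl'
      have hstep : 1 / ((l:ℝ) + 1) ≤ Real.log ((l:ℝ) + 1) - Real.log l := by
        rw [← Real.log_div (by positivity) (by positivity)]
        have := Real.log_le_sub_one_of_pos (show (0:ℝ) < (l:ℝ)/((l:ℝ)+1) by positivity)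
        have hlog : Real.log ((l:ℝ)/((l:ℝ)+1)) = - Real.log (((l:ℝ)+1)/(l:ℝ)) := by
          rw [← Real.log_inv]
          congr 1
          field_simp
        rw [hlog] at this
        have heq : (l:ℝ)/((l:ℝ)+1) - 1 = -(1/((l:ℝ)+1)) := by
          field_simp
          ring
        rw [heq] at this
        linarith
      have hterm : ((l:ℝ) + 1) ^ (-1:ℝ) = 1 / ((l:ℝ) + 1) := by
        rw [Real.rpow_neg_one, one_div]
      push_cast
      rw [hterm]
      linarith

end AUX1
section AUX2
open Real Finset

lemma Zphi_eq (φ : ℝ) (l : ℕ) : Zphi φ l = S (-φ) l := rfl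
lemma Z_eq (γ : ℝ) (n : ℕ) : Z γ n = S (-γ) (n - 1) := rfl

lemma one_le_log {n : ℕ} (hn : 3 ≤ n) : 1 ≤ Real.log n := by
  have h3 : (3:ℝ) ≤ (n:ℝ) := by exact_mod_cast hn
  have he : Real.exp 1 ≤ 3 := by
    have := Real.exp_one_lt_d9
    linarith
  calc (1:ℝ) = Real.log (Real.exp 1) := (Real.log_exp 1).symm
    _ ≤ Real.log n := Real.log_le_log (Real.exp_pos 1) (by linarith)

lemma log_pos3 {n : ℕ} (hn : 3 ≤ n) : 0 < Real.log n := lt_of_lt_of_le one_pos (one_le_log hn)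

lemma nsub_cast {n : ℕ} (hn : 1 ≤ n) : ((n - 1 : ℕ) : ℝ) = (n : ℝ) - 1 := by
  have : (1:ℕ) ≤ n := hn
  push_cast [Nat.cast_sub this]
  ring

lemma nsub_rpow_le {a : ℝ} (ha : 0 ≤ a) {n : ℕ} (hn : 1 ≤ n) :
    ((n - 1 : ℕ) : ℝ) ^ a ≤ (n : ℝ) ^ a := by
  apply Real.rpow_le_rpow (by positivity) _ ha
  rw [nsub_cast hn]
  linarith

lemma nsub_rpow_ge {a : ℝ} (ha0 : 0 ≤ a) (ha1 : a ≤ 2) {n : ℕ} (hn : 2 ≤ n) :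
    (n : ℝ) ^ a / 4 ≤ ((n - 1 : ℕ) : ℝ) ^ a := by
  have hx2 : (2:ℝ) ≤ (n:ℝ) := by exact_mod_cast hn
  have h1 : (n:ℝ) / 2 ≤ ((n - 1 : ℕ) : ℝ) := by
    rw [nsub_cast (by omega)]
    linarith
  have h2 : ((n:ℝ) / 2) ^ a ≤ ((n - 1 : ℕ) : ℝ) ^ a :=
    Real.rpow_le_rpow (by positivity) h1 ha0
  have h3 : ((n:ℝ) / 2) ^ a = (n:ℝ) ^ a / 2 ^ a :=
    Real.div_rpow (Nat.cast_nonneg n) (by norm_num) a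
  have h4 : (2:ℝ) ^ a ≤ 2 ^ (2:ℝ) := Real.rpow_le_rpow_of_exponent_le (by norm_num) ha1
  have h5 : (2:ℝ) ^ (2:ℝ) = 4 := by
    rw [show (2:ℝ) = ((2:ℕ):ℝ) by norm_num, Real.rpow_natCast]
    norm_num
  have h6 : (n:ℝ) ^ a / 4 ≤ (n:ℝ) ^ a / 2 ^ a := by
    apply div_le_div_of_nonneg_left (by positivity) (by positivity)
    linarith
  linarith [h3 ▸ h2]

lemma prod3_mono {x1 x2 x3 y1 y2 y3 : ℝ} (h1 : y1 ≤ x1) (h2 : y2 ≤ x2) (h3 : y3 ≤ x3)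
    (hy1 : 0 ≤ y1) (hy2 : 0 ≤ y2) (hy3 : 0 ≤ y3) : y1 * y2 * y3 ≤ x1 * x2 * x3 := by
  have hx1 : 0 ≤ x1 := hy1.trans h1
  have hx2 : 0 ≤ x2 := hy2.trans h2
  have h12 : y1 * y2 ≤ x1 * x2 := mul_le_mul h1 h2 hy2 hx1
  exact mul_le_mul h12 h3 hy3 (mul_nonneg hx1 hx2)

lemma rpow_merge3 {x : ℝ} (hx : 0 < x) (a b : ℝ) : x * x ^ a * x ^ b = x ^ (1 + a + b) := by
  rw [Real.rpow_add hx, Real.rpow_add hx, Real.rpow_one]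

lemma Zphi_bounds {φ : ℝ} (hφ₁ : 1 < φ) {l : ℕ} (hl : 1 ≤ l) :
    1 ≤ Zphi φ l ∧ Zphi φ l ≤ 1 + 1/(φ - 1) := by
  constructor
  · rw [Zphi_eq]; exact one_le_S _ hl
  · rw [Zphi_eq]
    have := S_upper_conv (p := -φ) (by linarith) l
    rw [show -(-φ + 1) = φ - 1 by ring] at this
    exact this

-- generic D sandwich maker
lemma D_sand_generic {φ p : ℝ} (hφ₁ : 1 < φ) (hp1 : -1 < p) (hp0 : p ≤ 0)
    (l : ℕ) (hl : 1 ≤ l) :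
    ((1 + 1/(φ-1)) * (p + 2))⁻¹ * (l:ℝ) ^ (p + 1) ≤ (Zphi φ l)⁻¹ * S p l ∧
    (Zphi φ l)⁻¹ * S p l ≤ (p + 1)⁻¹ * (l:ℝ) ^ (p + 1) := by
  have hKpos : 0 < 1 + 1/(φ-1) := by
    have := div_pos one_pos (show (0:ℝ) < φ - 1 by linarith)
    linarith
  obtain ⟨hZ1, hZ2⟩ := Zphi_bounds hφ₁ hl
  have hZ0 : 0 < Zphi φ l := by linarith
  have hinv1 : (1 + 1/(φ-1))⁻¹ ≤ (Zphi φ l)⁻¹ := inv_anti₀ hZ0 hZ2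
  have hinv2 : (Zphi φ l)⁻¹ ≤ 1 := by
    rw [inv_le_one_iff₀]
    right; exact hZ1
  have hSl := S_lower hp1 (by linarith) hl
  have hSu := S_upper_mid hp1 hp0 l
  have hS0 : 0 ≤ S p l := S_nonneg _ _
  have hrp : 0 ≤ (l:ℝ) ^ (p + 1) := Real.rpow_nonneg (by positivity) _
  have hq0 : 0 < p + 1 := by linarith
  constructor
  · calc ((1 + 1/(φ-1)) * (p + 2))⁻¹ * (l:ℝ) ^ (p + 1)
        = (1 + 1/(φ-1))⁻¹ * ((l:ℝ) ^ (p + 1) / (p + 2)) := by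
          rw [mul_inv, div_eq_mul_inv]
          ring
      _ ≤ (Zphi φ l)⁻¹ * S p l :=
          mul_le_mul hinv1 hSl (div_nonneg hrp (by linarith)) (inv_nonneg.mpr hZ0.le)
  · calc (Zphi φ l)⁻¹ * S p l ≤ 1 * ((l:ℝ) ^ (p + 1) / (p + 1)) :=
          mul_le_mul hinv2 hSu hS0 one_pos.le
      _ = (p + 1)⁻¹ * (l:ℝ) ^ (p + 1) := by
          rw [one_mul, div_eq_mul_inv]
          ring

lemma D1_sand {φ : ℝ} (hφ₁ : 1 < φ) (hφ₂ : φ < 3/2) :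
    ∃ c C : ℝ, 0 < c ∧ 0 < C ∧ ∀ l : ℕ, 1 ≤ l →
      c * (l:ℝ) ^ (2 - φ) ≤ D1 φ l ∧ D1 φ l ≤ C * (l:ℝ) ^ (2 - φ) := by
  have hKpos : 0 < 1 + 1/(φ-1) := by
    have := div_pos one_pos (show (0:ℝ) < φ - 1 by linarith)
    linarith
  refine ⟨((1 + 1/(φ-1)) * (3 - φ))⁻¹, (2 - φ)⁻¹, ?_, ?_, fun l hl => ?_⟩
  · apply inv_pos.mpr
    apply mul_pos hKpos
    linarith
  · apply inv_pos.mpr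
    linarith
  · have h := D_sand_generic (p := 1 - φ) hφ₁ (by linarith) (by linarith) l hl
    rw [show (1:ℝ) - φ + 1 = 2 - φ by ring, show (1:ℝ) - φ + 2 = 3 - φ by ring] at h
    exact h

lemma Dhalf_sand {φ : ℝ} (hφ₁ : 1 < φ) (hφ₂ : φ < 3/2) :
    ∃ c C : ℝ, 0 < c ∧ 0 < C ∧ ∀ l : ℕ, 1 ≤ l →
      c * (l:ℝ) ^ (3/2 - φ) ≤ Dhalf φ l ∧ Dhalf φ l ≤ C * (l:ℝ) ^ (3/2 - φ) := by
  have hKpos : 0 < 1 + 1/(φ-1) := by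
    have := div_pos one_pos (show (0:ℝ) < φ - 1 by linarith)
    linarith
  refine ⟨((1 + 1/(φ-1)) * (5/2 - φ))⁻¹, (3/2 - φ)⁻¹, ?_, ?_, fun l hl => ?_⟩
  · apply inv_pos.mpr
    apply mul_pos hKpos
    linarith
  · apply inv_pos.mpr
    linarith
  · have h := D_sand_generic (p := 1/2 - φ) hφ₁ (by linarith) (by linarith) l hl
    rw [show (1:ℝ)/2 - φ + 1 = 3/2 - φ by ring, show (1:ℝ)/2 - φ + 2 = 5/2 - φ by ring] at h
    exact h

-- inner weighted sum sandwich
lemma inner_sand {γ e c C : ℝ} (hc : 0 ≤ c) {D : ℕ → ℝ}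
    (hD : ∀ l : ℕ, 1 ≤ l → c * (l:ℝ) ^ e ≤ D l ∧ D l ≤ C * (l:ℝ) ^ e) (m : ℕ) :
    c * S (e - γ) m ≤ (∑ l ∈ Finset.Icc 1 m, (l:ℝ) ^ (-γ) * D l) ∧
      (∑ l ∈ Finset.Icc 1 m, (l:ℝ) ^ (-γ) * D l) ≤ C * S (e - γ) m := by
  have key : ∀ l : ℕ, 1 ≤ l → (l:ℝ) ^ (-γ) * ((l:ℝ) ^ e) = (l:ℝ) ^ (e - γ) := by
    intro l hl
    have hl0 : (0:ℝ) < l := by exact_mod_cast hl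
    rw [← Real.rpow_add hl0]
    ring_nf
  constructor
  · rw [S, Finset.mul_sum]
    apply Finset.sum_le_sum
    intro l hl
    simp only [Finset.mem_Icc] at hl
    have hl0 : (0:ℝ) < l := by exact_mod_cast hl.1
    have h1 := (hD l hl.1).1
    calc c * (l:ℝ) ^ (e - γ) = (l:ℝ) ^ (-γ) * (c * (l:ℝ) ^ e) := by
          rw [← key l hl.1]
          ring
      _ ≤ (l:ℝ) ^ (-γ) * D l :=
          mul_le_mul_of_nonneg_left h1 (Real.rpow_nonneg hl0.le _)
  · rw [S, Finset.mul_sum]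
    apply Finset.sum_le_sum
    intro l hl
    simp only [Finset.mem_Icc] at hl
    have hl0 : (0:ℝ) < l := by exact_mod_cast hl.1
    have h1 := (hD l hl.1).2
    calc (l:ℝ) ^ (-γ) * D l ≤ (l:ℝ) ^ (-γ) * (C * (l:ℝ) ^ e) :=
          mul_le_mul_of_nonneg_left h1 (Real.rpow_nonneg hl0.le _)
      _ = C * (l:ℝ) ^ (e - γ) := by
          rw [← key l hl.1]
          ring

end AUX2
section AUX3
open Real Finset

lemma W_sand {γ φ : ℝ} (hφ₁ : 1 < φ) (hφ₂ : φ < 3/2) :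
    ∃ c C : ℝ, 0 < c ∧ 0 < C ∧ ∀ n : ℕ, 2 ≤ n →
      c * ((n:ℝ) * (Z γ n)⁻¹ * S (2 - φ - γ) (n-1)) ≤ W γ φ n ∧
      W γ φ n ≤ C * ((n:ℝ) * (Z γ n)⁻¹ * S (2 - φ - γ) (n-1)) := by
  obtain ⟨c, C, hc, hC, hD⟩ := D1_sand hφ₁ hφ₂
  refine ⟨c, C, hc, hC, fun n hn => ?_⟩
  have hin := inner_sand (γ := γ) hc.le hD (n - 1)
  have hfac : 0 ≤ (n:ℝ) * (Z γ n)⁻¹ := by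
    apply mul_nonneg (Nat.cast_nonneg n)
    apply inv_nonneg.mpr
    rw [Z_eq]
    exact S_nonneg _ _
  have e1 : W γ φ n = (n:ℝ) * (Z γ n)⁻¹ * ∑ l ∈ Finset.Icc 1 (n-1), (l:ℝ)^(-γ) * D1 φ l := rfl
  constructor
  · rw [e1]
    calc c * ((n:ℝ) * (Z γ n)⁻¹ * S (2 - φ - γ) (n-1))
        = (n:ℝ) * (Z γ n)⁻¹ * (c * S ((2 - φ) - γ) (n-1)) := by ring_nf
      _ ≤ (n:ℝ) * (Z γ n)⁻¹ * ∑ l ∈ Finset.Icc 1 (n-1), (l:ℝ)^(-γ) * D1 φ l :=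
          mul_le_mul_of_nonneg_left hin.1 hfac
  · rw [e1]
    calc (n:ℝ) * (Z γ n)⁻¹ * ∑ l ∈ Finset.Icc 1 (n-1), (l:ℝ)^(-γ) * D1 φ l
        ≤ (n:ℝ) * (Z γ n)⁻¹ * (C * S ((2 - φ) - γ) (n-1)) :=
          mul_le_mul_of_nonneg_left hin.2 hfac
      _ = C * ((n:ℝ) * (Z γ n)⁻¹ * S (2 - φ - γ) (n-1)) := by ring_nf

lemma M_sand {γ φ : ℝ} (hφ₁ : 1 < φ) (hφ₂ : φ < 3/2) :
    ∃ c C : ℝ, 0 < c ∧ 0 < C ∧ ∀ n : ℕ, 2 ≤ n →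
      c * ((n:ℝ) * (Z γ n)⁻¹ * S (3/2 - φ - γ) (n-1)) ≤ M γ φ n ∧
      M γ φ n ≤ C * ((n:ℝ) * (Z γ n)⁻¹ * S (3/2 - φ - γ) (n-1)) := by
  obtain ⟨c, C, hc, hC, hD⟩ := Dhalf_sand hφ₁ hφ₂
  refine ⟨c, C, hc, hC, fun n hn => ?_⟩
  have hin := inner_sand (γ := γ) hc.le hD (n - 1)
  have hfac : 0 ≤ (n:ℝ) * (Z γ n)⁻¹ := by
    apply mul_nonneg (Nat.cast_nonneg n)
    apply inv_nonneg.mpr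
    rw [Z_eq]
    exact S_nonneg _ _
  have e1 : M γ φ n = (n:ℝ) * (Z γ n)⁻¹ * ∑ l ∈ Finset.Icc 1 (n-1), (l:ℝ)^(-γ) * Dhalf φ l := rfl
  constructor
  · rw [e1]
    calc c * ((n:ℝ) * (Z γ n)⁻¹ * S (3/2 - φ - γ) (n-1))
        = (n:ℝ) * (Z γ n)⁻¹ * (c * S ((3/2 - φ) - γ) (n-1)) := by ring_nf
      _ ≤ (n:ℝ) * (Z γ n)⁻¹ * ∑ l ∈ Finset.Icc 1 (n-1), (l:ℝ)^(-γ) * Dhalf φ l :=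
          mul_le_mul_of_nonneg_left hin.1 hfac
  · rw [e1]
    calc (n:ℝ) * (Z γ n)⁻¹ * ∑ l ∈ Finset.Icc 1 (n-1), (l:ℝ)^(-γ) * Dhalf φ l
        ≤ (n:ℝ) * (Z γ n)⁻¹ * (C * S ((3/2 - φ) - γ) (n-1)) :=
          mul_le_mul_of_nonneg_left hin.2 hfac
      _ = C * ((n:ℝ) * (Z γ n)⁻¹ * S (3/2 - φ - γ) (n-1)) := by ring_nf

lemma W_nonneg (γ φ : ℝ) (n : ℕ) : 0 ≤ W γ φ n := by
  apply mul_nonneg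
  · apply mul_nonneg (Nat.cast_nonneg n)
    apply inv_nonneg.mpr
    rw [Z_eq]; exact S_nonneg _ _
  · apply Finset.sum_nonneg
    intro l hl
    apply mul_nonneg (Real.rpow_nonneg (Nat.cast_nonneg l) _)
    apply mul_nonneg
    · apply inv_nonneg.mpr
      rw [Zphi_eq]; exact S_nonneg _ _
    · apply Finset.sum_nonneg
      intro d _
      positivity

lemma M_nonneg (γ φ : ℝ) (n : ℕ) : 0 ≤ M γ φ n := by
  apply mul_nonneg
  · apply mul_nonneg (Nat.cast_nonneg n)
    apply inv_nonneg.mpr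
    rw [Z_eq]; exact S_nonneg _ _
  · apply Finset.sum_nonneg
    intro l hl
    apply mul_nonneg (Real.rpow_nonneg (Nat.cast_nonneg l) _)
    apply mul_nonneg
    · apply inv_nonneg.mpr
      rw [Zphi_eq]; exact S_nonneg _ _
    · apply Finset.sum_nonneg
      intro d _
      positivity

-- Z bounds
lemma Z_bounds_gt1 {γ : ℝ} (hγ : 1 < γ) {n : ℕ} (hn : 2 ≤ n) :
    1 ≤ Z γ n ∧ Z γ n ≤ 1 + 1/(γ - 1) := by
  constructor
  · rw [Z_eq]
    exact one_le_S _ (by omega)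
  · rw [Z_eq]
    have := S_upper_conv (p := -γ) (by linarith) (n-1)
    rw [show -(-γ + 1) = γ - 1 by ring] at this
    exact this

lemma Z_bounds_eq1 {n : ℕ} (hn : 3 ≤ n) :
    Real.log n ≤ Z 1 n ∧ Z 1 n ≤ 2 * Real.log n := by
  have h1 : Z 1 n = S (-1 : ℝ) (n - 1) := Z_eq 1 n
  have hc : ((n - 1 : ℕ) : ℝ) + 1 = (n : ℝ) := by
    rw [nsub_cast (by omega)]
    ring
  constructor
  · rw [h1, ← hc]
    exact S_harm_lower (n-1)
  · rw [h1]
    have h2 := S_harm_upper (l := n - 1) (by omega)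
    have h3 : Real.log ((n-1:ℕ):ℝ) ≤ Real.log n := by
      apply Real.log_le_log
      · rw [nsub_cast (by omega)]
        have : (3:ℝ) ≤ (n:ℝ) := by exact_mod_cast hn
        linarith
      · rw [nsub_cast (by omega)]
        have : (3:ℝ) ≤ (n:ℝ) := by exact_mod_cast hn
        linarith
    have h4 := one_le_log hn
    linarith

lemma Z_bounds_lt1 {γ : ℝ} (hγ0 : 0 ≤ γ) (hγ : γ < 1) {n : ℕ} (hn : 2 ≤ n) :
    (n:ℝ)^(1-γ) / (4 * (2 - γ)) ≤ Z γ n ∧ Z γ n ≤ (n:ℝ)^(1-γ) / (1 - γ) := by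
  have hp1 : (-1:ℝ) < -γ := by linarith
  have hp0 : -γ ≤ (0:ℝ) := by linarith
  have hq : -γ + 1 = 1 - γ := by ring
  have hq2 : -γ + 2 = 2 - γ := by ring
  constructor
  · rw [Z_eq]
    have h1 := S_lower_mid hp1 hp0 (l := n - 1) (by omega)
    rw [hq, hq2] at h1
    have h2 := nsub_rpow_ge (a := 1 - γ) (by linarith) (by linarith) hn
    calc (n:ℝ)^(1-γ) / (4 * (2 - γ)) = ((n:ℝ)^(1-γ) / 4) / (2 - γ) := by
          rw [div_div]
      _ ≤ ((n-1:ℕ):ℝ)^(1-γ) / (2 - γ) := by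
          apply div_le_div_of_nonneg_right h2  -- maybe wrong name/form
          linarith
      _ ≤ S (-γ) (n-1) := h1
  · rw [Z_eq]
    have h1 := S_upper_mid hp1 hp0 (n - 1)
    rw [hq] at h1
    have h2 := nsub_rpow_le (a := 1 - γ) (by linarith) (n := n) (by omega)
    calc S (-γ) (n-1) ≤ ((n-1:ℕ):ℝ)^(1-γ) / (1 - γ) := h1
      _ ≤ (n:ℝ)^(1-γ) / (1 - γ) := by
          apply div_le_div_of_nonneg_right h2
          linarith

-- shifted S bounds at n-1 in terms of n, for q ∈ (-1,1)
lemma S_shift_sand {q : ℝ} (hq : -1 < q) (hq1 : q < 1) {n : ℕ} (hn : 2 ≤ n) :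
    (n:ℝ)^(q+1) / (4 * (q + 2)) ≤ S q (n-1) ∧ S q (n-1) ≤ (1/(q+1) + 4) * (n:ℝ)^(q+1) := by
  constructor
  · have h1 := S_lower hq hq1 (l := n - 1) (by omega)
    have h2 := nsub_rpow_ge (a := q + 1) (by linarith) (by linarith) hn
    calc (n:ℝ)^(q+1) / (4 * (q + 2)) = ((n:ℝ)^(q+1) / 4) / (q + 2) := by rw [div_div]
      _ ≤ ((n-1:ℕ):ℝ)^(q+1) / (q + 2) := by
          apply div_le_div_of_nonneg_right h2
          linarith
      _ ≤ S q (n-1) := h1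
  · have h1 := S_upper hq hq1 (l := n - 1) (by omega)
    have h2 := nsub_rpow_le (a := q + 1) (by linarith) (n := n) (by omega)
    calc S q (n-1) ≤ (1/(q+1) + 4) * ((n-1:ℕ):ℝ)^(q+1) := h1
      _ ≤ (1/(q+1) + 4) * (n:ℝ)^(q+1) := by
          apply mul_le_mul_of_nonneg_left h2
          have : 0 < 1/(q+1) := by
            apply div_pos one_pos
            linarith
          linarith

lemma S_shift_harm {n : ℕ} (hn : 3 ≤ n) :
    Real.log n ≤ S (-1 : ℝ) (n-1) ∧ S (-1 : ℝ) (n-1) ≤ 2 * Real.log n := by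
  have := Z_bounds_eq1 hn
  rwa [Z_eq] at this

lemma S_shift_conv {q : ℝ} (hq : q < -1) {n : ℕ} (hn : 2 ≤ n) :
    1 ≤ S q (n-1) ∧ S q (n-1) ≤ 1 + 1/(-(q+1)) := by
  exact ⟨one_le_S _ (by omega), S_upper_conv hq (n-1)⟩

-- g lemmas
lemma g_eq_one (n : ℕ) : g 1 n = Real.sqrt ((n:ℝ) / Real.log n) := by
  rw [g]
  norm_num

lemma g_of_lt_one {β : ℝ} (hβ : β < 1) (n : ℕ) : g β n = Real.sqrt n := by
  rw [g, if_neg (by linarith), if_neg (by linarith), if_neg (by linarith), if_neg (by linarith)]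

lemma g_one_le_sqrt {n : ℕ} (hn : 3 ≤ n) : g 1 n ≤ Real.sqrt n := by
  rw [g_eq_one]
  apply Real.sqrt_le_sqrt
  have hL := one_le_log hn
  have hn0 : (0:ℝ) ≤ (n:ℝ) := Nat.cast_nonneg n
  calc (n:ℝ) / Real.log n ≤ (n:ℝ) / 1 := by
        apply div_le_div_of_nonneg_left hn0 one_pos  -- check
        exact hL
    _ = (n:ℝ) := div_one _

lemma g_one_eq {n : ℕ} (hn : 3 ≤ n) :
    g 1 n = Real.sqrt n / Real.sqrt (Real.log n) := by
  rw [g_eq_one, Real.sqrt_div (Nat.cast_nonneg n)]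

end AUX3
section AUX4
open Real Finset

lemma isBigTheta_of_bounds {f h : ℕ → ℝ} {c C : ℝ} (hc : 0 < c) (hC : 0 < C) (N : ℕ)
    (hh : ∀ n, N ≤ n → 0 ≤ h n)
    (hb : ∀ n, N ≤ n → c * h n ≤ f n ∧ f n ≤ C * h n) : IsBigTheta f h := by
  refine ⟨min c C, max c C, lt_min hc hC, (min_le_left c C).trans (le_max_left c C), N,
    fun n hn => ⟨?_, ?_⟩⟩
  · calc min c C * h n ≤ c * h n := mul_le_mul_of_nonneg_right (min_le_left c C) (hh n hn)
      _ ≤ f n := (hb n hn).1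
  · calc f n ≤ C * h n := (hb n hn).2
    _ ≤ max c C * h n := mul_le_mul_of_nonneg_right (le_max_right c C) (hh n hn)

lemma sqrt_mul_eq_rpow {x : ℝ} (hx : 0 ≤ x) : Real.sqrt x * x = x ^ (3/2 : ℝ) := by
  rw [Real.sqrt_eq_rpow]
  nth_rewrite 2 [← Real.rpow_one x]
  rw [← Real.rpow_add' hx (by norm_num)]
  norm_num

-- Case E core: 0 ≤ γ < 1, h = n^(3-φ)
lemma caseE {γ φ : ℝ} (hφ₁ : 1 < φ) (hφ₂ : φ < 3/2) (hγ0 : 0 ≤ γ) (hγ : γ < 1)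
    (g' : ℕ → ℝ) (hg : ∀ n : ℕ, 3 ≤ n → 0 ≤ g' n ∧ g' n ≤ Real.sqrt n) :
    IsBigTheta (fun n => g' n * M γ φ n + W γ φ n) (fun n => (n:ℝ) ^ (3 - φ)) := by
  obtain ⟨cW, CW, hcW, hCW, hW⟩ := W_sand (γ := γ) hφ₁ hφ₂
  obtain ⟨cM, CM, hcM, hCM, hM⟩ := M_sand (γ := γ) hφ₁ hφ₂
  have hqW1 : (-1:ℝ) < 2 - φ - γ := by linarith
  have hqW2 : (2:ℝ) - φ - γ < 1 := by linarith
  have hqM1 : (-1:ℝ) < 3/2 - φ - γ := by linarith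
  have hqM2 : (3:ℝ)/2 - φ - γ < 1 := by linarith
  refine isBigTheta_of_bounds
    (c := cW * ((1 - γ) / (4 * ((2 - φ - γ) + 2))))
    (C := CW * (4 * (2 - γ) * (1/((2 - φ - γ)+1) + 4))
        + CM * (4 * (2 - γ) * (1/((3/2 - φ - γ)+1) + 4)))
    ?_ ?_ 3 (fun n hn => Real.rpow_nonneg (Nat.cast_nonneg n) _) (fun n hn => ?_)
  · apply mul_pos hcW
    apply div_pos (by linarith)
    linarith
  · have t1 : (0:ℝ) < 1/((2 - φ - γ)+1) := by
      apply div_pos one_pos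
      linarith
    have t2 : (0:ℝ) < 1/((3/2 - φ - γ)+1) := by
      apply div_pos one_pos
      linarith
    have := mul_pos hCW (by nlinarith : (0:ℝ) < 4 * (2 - γ) * (1/((2 - φ - γ)+1) + 4))
    have := mul_pos hCM (by nlinarith : (0:ℝ) < 4 * (2 - γ) * (1/((3/2 - φ - γ)+1) + 4))
    linarith
  -- main bounds for n ≥ 3
  have hn2 : 2 ≤ n := by omega
  have hx0 : (0:ℝ) < (n:ℝ) := by positivity
  have hZl := (Z_bounds_lt1 hγ0 hγ hn2).1
  have hZu := (Z_bounds_lt1 hγ0 hγ hn2).2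
  have hZpos : (0:ℝ) < Z γ n := lt_of_lt_of_le (div_pos (Real.rpow_pos_of_pos hx0 _) (by linarith)) hZl
  have hZinv_u : (Z γ n)⁻¹ ≤ 4 * (2 - γ) * (n:ℝ) ^ (γ - 1) := by
    have h1 : (Z γ n)⁻¹ ≤ ((n:ℝ)^(1-γ) / (4 * (2 - γ)))⁻¹ := inv_anti₀ (div_pos (Real.rpow_pos_of_pos hx0 _) (by linarith)) hZl
    calc (Z γ n)⁻¹ ≤ ((n:ℝ)^(1-γ) / (4 * (2 - γ)))⁻¹ := h1
      _ = 4 * (2 - γ) * ((n:ℝ)^(1-γ))⁻¹ := by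
          rw [div_eq_mul_inv, mul_inv, inv_inv]
          ring
      _ = 4 * (2 - γ) * (n:ℝ) ^ (γ - 1) := by
          rw [← Real.rpow_neg hx0.le, show -(1-γ) = γ - 1 by ring]
  have hZinv_l : (1 - γ) * (n:ℝ) ^ (γ - 1) ≤ (Z γ n)⁻¹ := by
    have h1 : ((n:ℝ)^(1-γ) / (1 - γ))⁻¹ ≤ (Z γ n)⁻¹ := inv_anti₀ hZpos hZu
    calc (1 - γ) * (n:ℝ) ^ (γ - 1)
        = ((n:ℝ)^(1-γ) / (1 - γ))⁻¹ := by
          rw [div_eq_mul_inv, mul_inv, inv_inv, ← Real.rpow_neg hx0.le,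
            show -(1-γ) = γ - 1 by ring]
          ring
      _ ≤ (Z γ n)⁻¹ := h1
  have hSW := S_shift_sand hqW1 hqW2 hn2
  have hSM := S_shift_sand hqM1 hqM2 hn2
  have hZinv_nn : (0:ℝ) ≤ (Z γ n)⁻¹ := inv_nonneg.mpr hZpos.le
  have hS_nn : (0:ℝ) ≤ S (2 - φ - γ) (n-1) := S_nonneg _ _
  have hSM_nn : (0:ℝ) ≤ S (3/2 - φ - γ) (n-1) := S_nonneg _ _
  constructor
  · -- lower bound: c * n^(3-φ) ≤ g'·M + W
    have hWl := (hW n hn2).1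
    have hcore : (n:ℝ) * ((1 - γ) * (n:ℝ)^(γ-1)) * ((n:ℝ)^((2-φ-γ)+1) / (4 * ((2-φ-γ)+2)))
        ≤ (n:ℝ) * (Z γ n)⁻¹ * S (2 - φ - γ) (n-1) := by
      apply prod3_mono le_rfl hZinv_l hSW.1 hx0.le
        (mul_nonneg (by linarith) (Real.rpow_nonneg hx0.le _))
        (div_nonneg (Real.rpow_nonneg hx0.le _) (by linarith))
    have hprod : (n:ℝ) * ((1 - γ) * (n:ℝ)^(γ-1)) * ((n:ℝ)^((2-φ-γ)+1) / (4 * ((2-φ-γ)+2)))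
        = ((1 - γ) / (4 * ((2 - φ - γ) + 2))) * (n:ℝ) ^ (3 - φ) := by
      rw [show (3:ℝ) - φ = 1 + (γ-1) + ((2-φ-γ)+1) by ring, ← rpow_merge3 hx0]
      ring
    have hMg : 0 ≤ g' n * M γ φ n := mul_nonneg (hg n hn).1 (M_nonneg γ φ n)
    calc cW * ((1 - γ) / (4 * ((2 - φ - γ) + 2))) * (n:ℝ) ^ (3 - φ)
        = cW * ((n:ℝ) * ((1 - γ) * (n:ℝ)^(γ-1)) * ((n:ℝ)^((2-φ-γ)+1) / (4 * ((2-φ-γ)+2)))) := by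
          rw [hprod]
          ring
      _ ≤ cW * ((n:ℝ) * (Z γ n)⁻¹ * S (2 - φ - γ) (n-1)) :=
          mul_le_mul_of_nonneg_left hcore hcW.le
      _ ≤ W γ φ n := hWl
      _ ≤ g' n * M γ φ n + W γ φ n := by linarith
  · -- upper bound
    have hWu := (hW n hn2).2
    have hMu := (hM n hn2).2
    have hcoreW : (n:ℝ) * (Z γ n)⁻¹ * S (2 - φ - γ) (n-1)
        ≤ (n:ℝ) * (4 * (2 - γ) * (n:ℝ)^(γ-1)) * ((1/((2-φ-γ)+1) + 4) * (n:ℝ)^((2-φ-γ)+1)) :=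
      prod3_mono le_rfl hZinv_u hSW.2 hx0.le hZinv_nn hS_nn
    have hprodW : (n:ℝ) * (4 * (2 - γ) * (n:ℝ)^(γ-1)) * ((1/((2-φ-γ)+1) + 4) * (n:ℝ)^((2-φ-γ)+1))
        = (4 * (2 - γ) * (1/((2-φ-γ)+1) + 4)) * (n:ℝ) ^ (3 - φ) := by
      rw [show (3:ℝ) - φ = 1 + (γ-1) + ((2-φ-γ)+1) by ring, ← rpow_merge3 hx0]
      ring
    have hcoreM : (n:ℝ) * (Z γ n)⁻¹ * S (3/2 - φ - γ) (n-1)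
        ≤ (n:ℝ) * (4 * (2 - γ) * (n:ℝ)^(γ-1)) * ((1/((3/2-φ-γ)+1) + 4) * (n:ℝ)^((3/2-φ-γ)+1)) :=
      prod3_mono le_rfl hZinv_u hSM.2 hx0.le hZinv_nn hSM_nn
    have hprodM : (n:ℝ) * (4 * (2 - γ) * (n:ℝ)^(γ-1)) * ((1/((3/2-φ-γ)+1) + 4) * (n:ℝ)^((3/2-φ-γ)+1))
        = (4 * (2 - γ) * (1/((3/2-φ-γ)+1) + 4)) * (n:ℝ) ^ (5/2 - φ) := by
      rw [show (5:ℝ)/2 - φ = 1 + (γ-1) + ((3/2-φ-γ)+1) by ring, ← rpow_merge3 hx0]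
      ring
    have hsqrt : Real.sqrt (n:ℝ) * (n:ℝ) ^ (5/2 - φ) = (n:ℝ) ^ (3 - φ) := by
      rw [Real.sqrt_eq_rpow, ← Real.rpow_add hx0,
        show (1:ℝ)/2 + (5/2 - φ) = 3 - φ by ring]
    have hgM : g' n * M γ φ n
        ≤ CM * (4 * (2 - γ) * (1/((3/2-φ-γ)+1) + 4)) * (n:ℝ) ^ (3 - φ) := by
      calc g' n * M γ φ n ≤ Real.sqrt n * M γ φ n :=
            mul_le_mul_of_nonneg_right (hg n hn).2 (M_nonneg γ φ n)
        _ ≤ Real.sqrt n * (CM * ((n:ℝ) * (Z γ n)⁻¹ * S (3/2 - φ - γ) (n-1))) :=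
            mul_le_mul_of_nonneg_left hMu (Real.sqrt_nonneg _)
        _ ≤ Real.sqrt n * (CM * ((4 * (2 - γ) * (1/((3/2-φ-γ)+1) + 4)) * (n:ℝ) ^ (5/2 - φ))) := by
            apply mul_le_mul_of_nonneg_left _ (Real.sqrt_nonneg _)
            apply mul_le_mul_of_nonneg_left _ hCM.le
            rw [← hprodM]
            exact hcoreM
        _ = CM * (4 * (2 - γ) * (1/((3/2-φ-γ)+1) + 4)) * (Real.sqrt (n:ℝ) * (n:ℝ) ^ (5/2 - φ)) := by
            ring
        _ = CM * (4 * (2 - γ) * (1/((3/2-φ-γ)+1) + 4)) * (n:ℝ) ^ (3 - φ) := by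
            rw [hsqrt]
    have hWub : W γ φ n ≤ CW * (4 * (2 - γ) * (1/((2-φ-γ)+1) + 4)) * (n:ℝ) ^ (3 - φ) := by
      calc W γ φ n ≤ CW * ((n:ℝ) * (Z γ n)⁻¹ * S (2 - φ - γ) (n-1)) := hWu
        _ ≤ CW * ((4 * (2 - γ) * (1/((2-φ-γ)+1) + 4)) * (n:ℝ) ^ (3 - φ)) := by
            apply mul_le_mul_of_nonneg_left _ hCW.le
            rw [← hprodW]
            exact hcoreW
        _ = CW * (4 * (2 - γ) * (1/((2-φ-γ)+1) + 4)) * (n:ℝ) ^ (3 - φ) := by ring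
    calc g' n * M γ φ n + W γ φ n
        ≤ CM * (4 * (2 - γ) * (1/((3/2-φ-γ)+1) + 4)) * (n:ℝ) ^ (3 - φ)
          + CW * (4 * (2 - γ) * (1/((2-φ-γ)+1) + 4)) * (n:ℝ) ^ (3 - φ) := by linarith
      _ = (CW * (4 * (2 - γ) * (1/((2 - φ - γ)+1) + 4))
          + CM * (4 * (2 - γ) * (1/((3/2 - φ - γ)+1) + 4))) * (n:ℝ) ^ (3 - φ) := by ring

end AUX4
section AUX5
open Real Finset

lemma rpow_merge1 {x : ℝ} (hx : 0 < x) (a : ℝ) : x * x ^ a = x ^ (1 + a) := by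
  rw [Real.rpow_add hx, Real.rpow_one]

lemma sqrt_rpow_merge {x : ℝ} (hx : 0 < x) (a : ℝ) :
    Real.sqrt x * x ^ a = x ^ (1/2 + a) := by
  rw [Real.sqrt_eq_rpow, ← Real.rpow_add hx]

-- Case D core: γ = 1, h = n^(3-φ)/log n
lemma caseD {φ : ℝ} (hφ₁ : 1 < φ) (hφ₂ : φ < 3/2)
    (g' : ℕ → ℝ) (hg : ∀ n : ℕ, 3 ≤ n → 0 ≤ g' n ∧ g' n ≤ Real.sqrt n) :
    IsBigTheta (fun n => g' n * M 1 φ n + W 1 φ n)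
      (fun n => (n:ℝ) ^ (3 - φ) / Real.log n) := by
  obtain ⟨cW, CW, hcW, hCW, hW⟩ := W_sand (γ := 1) hφ₁ hφ₂
  obtain ⟨cM, CM, hcM, hCM, hM⟩ := M_sand (γ := 1) hφ₁ hφ₂
  have hqW1 : (-1:ℝ) < 2 - φ - 1 := by linarith
  have hqW2 : (2:ℝ) - φ - 1 < 1 := by linarith
  have hqM1 : (-1:ℝ) < 3/2 - φ - 1 := by linarith
  have hqM2 : (3:ℝ)/2 - φ - 1 < 1 := by linarith
  have htW : (0:ℝ) < 1/((2 - φ - 1)+1) := div_pos one_pos (by linarith)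
  have htM : (0:ℝ) < 1/((3/2 - φ - 1)+1) := div_pos one_pos (by linarith)
  refine isBigTheta_of_bounds
    (c := cW * (1 / (8 * ((2 - φ - 1) + 2))))
    (C := CW * (1/((2 - φ - 1)+1) + 4) + CM * (1/((3/2 - φ - 1)+1) + 4))
    ?_ ?_ 3 (fun n hn => ?_) (fun n hn => ?_)
  · apply mul_pos hcW
    apply div_pos one_pos
    linarith
  · have := mul_pos hCW (by linarith : (0:ℝ) < 1/((2 - φ - 1)+1) + 4)
    have := mul_pos hCM (by linarith : (0:ℝ) < 1/((3/2 - φ - 1)+1) + 4)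
    linarith
  · exact div_nonneg (Real.rpow_nonneg (Nat.cast_nonneg n) _) (log_pos3 hn).le
  have hn2 : 2 ≤ n := by omega
  have hx0 : (0:ℝ) < (n:ℝ) := by positivity
  have hL : (0:ℝ) < Real.log n := log_pos3 hn
  have hZl := (Z_bounds_eq1 hn).1
  have hZu := (Z_bounds_eq1 hn).2
  have hZpos : (0:ℝ) < Z 1 n := lt_of_lt_of_le hL hZl
  have hZinv_u : (Z 1 n)⁻¹ ≤ (Real.log n)⁻¹ := inv_anti₀ hL hZl
  have hZinv_l : (2 * Real.log n)⁻¹ ≤ (Z 1 n)⁻¹ := inv_anti₀ hZpos hZu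
  have hSW := S_shift_sand hqW1 hqW2 hn2
  have hSM := S_shift_sand hqM1 hqM2 hn2
  have hZinv_nn : (0:ℝ) ≤ (Z 1 n)⁻¹ := inv_nonneg.mpr hZpos.le
  constructor
  · have hWl := (hW n hn2).1
    have hcore : (n:ℝ) * (2 * Real.log n)⁻¹ * ((n:ℝ)^((2-φ-1)+1) / (4 * ((2-φ-1)+2)))
        ≤ (n:ℝ) * (Z 1 n)⁻¹ * S (2 - φ - 1) (n-1) := by
      apply prod3_mono le_rfl hZinv_l hSW.1 hx0.le (by positivity)
        (div_nonneg (Real.rpow_nonneg hx0.le _) (by linarith))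
    have hprod : (n:ℝ) * (2 * Real.log n)⁻¹ * ((n:ℝ)^((2-φ-1)+1) / (4 * ((2-φ-1)+2)))
        = (1 / (8 * ((2 - φ - 1) + 2))) * ((n:ℝ) ^ (3 - φ) / Real.log n) := by
      rw [show (3:ℝ) - φ = 1 + ((2-φ-1)+1) by ring, ← rpow_merge1 hx0]
      field_simp
      ring
    have hMg : 0 ≤ g' n * M 1 φ n := mul_nonneg (hg n hn).1 (M_nonneg 1 φ n)
    calc cW * (1 / (8 * ((2 - φ - 1) + 2))) * ((n:ℝ) ^ (3 - φ) / Real.log n)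
        = cW * ((n:ℝ) * (2 * Real.log n)⁻¹ * ((n:ℝ)^((2-φ-1)+1) / (4 * ((2-φ-1)+2)))) := by
          rw [hprod]
          ring
      _ ≤ cW * ((n:ℝ) * (Z 1 n)⁻¹ * S (2 - φ - 1) (n-1)) :=
          mul_le_mul_of_nonneg_left hcore hcW.le
      _ ≤ W 1 φ n := hWl
      _ ≤ g' n * M 1 φ n + W 1 φ n := by linarith
  · have hWu := (hW n hn2).2
    have hMu := (hM n hn2).2
    have hcoreW : (n:ℝ) * (Z 1 n)⁻¹ * S (2 - φ - 1) (n-1)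
        ≤ (n:ℝ) * (Real.log n)⁻¹ * ((1/((2-φ-1)+1) + 4) * (n:ℝ)^((2-φ-1)+1)) :=
      prod3_mono le_rfl hZinv_u hSW.2 hx0.le hZinv_nn (S_nonneg _ _)
    have hprodW : (n:ℝ) * (Real.log n)⁻¹ * ((1/((2-φ-1)+1) + 4) * (n:ℝ)^((2-φ-1)+1))
        = (1/((2-φ-1)+1) + 4) * ((n:ℝ) ^ (3 - φ) / Real.log n) := by
      rw [show (3:ℝ) - φ = 1 + ((2-φ-1)+1) by ring, ← rpow_merge1 hx0]
      field_simp
    have hcoreM : (n:ℝ) * (Z 1 n)⁻¹ * S (3/2 - φ - 1) (n-1)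
        ≤ (n:ℝ) * (Real.log n)⁻¹ * ((1/((3/2-φ-1)+1) + 4) * (n:ℝ)^((3/2-φ-1)+1)) :=
      prod3_mono le_rfl hZinv_u hSM.2 hx0.le hZinv_nn (S_nonneg _ _)
    have hsq : Real.sqrt (n:ℝ) * ((n:ℝ) * (Real.log n)⁻¹ * ((1/((3/2-φ-1)+1) + 4) * (n:ℝ)^((3/2-φ-1)+1)))
        = (1/((3/2-φ-1)+1) + 4) * ((n:ℝ) ^ (3 - φ) / Real.log n) := by
      rw [show ((n:ℝ)^((3/2-φ-1)+1)) = (n:ℝ)^((3/2-φ-1)+1) from rfl]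
      have h1 : Real.sqrt (n:ℝ) * ((n:ℝ) * (n:ℝ)^((3/2-φ-1)+1)) = (n:ℝ) ^ (3 - φ) := by
        rw [rpow_merge1 hx0, sqrt_rpow_merge hx0,
          show (1:ℝ)/2 + (1 + (3/2-φ-1+1)) = 3 - φ by ring]
      calc Real.sqrt (n:ℝ) * ((n:ℝ) * (Real.log n)⁻¹ * ((1/((3/2-φ-1)+1) + 4) * (n:ℝ)^((3/2-φ-1)+1)))
          = (1/((3/2-φ-1)+1) + 4) * (Real.sqrt (n:ℝ) * ((n:ℝ) * (n:ℝ)^((3/2-φ-1)+1))) * (Real.log n)⁻¹ := by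
            ring
        _ = (1/((3/2-φ-1)+1) + 4) * ((n:ℝ) ^ (3 - φ) / Real.log n) := by
            rw [h1, div_eq_mul_inv]
            ring
    have hgM : g' n * M 1 φ n ≤ CM * ((1/((3/2-φ-1)+1) + 4) * ((n:ℝ) ^ (3 - φ) / Real.log n)) := by
      calc g' n * M 1 φ n ≤ Real.sqrt n * M 1 φ n :=
            mul_le_mul_of_nonneg_right (hg n hn).2 (M_nonneg 1 φ n)
        _ ≤ Real.sqrt n * (CM * ((n:ℝ) * (Z 1 n)⁻¹ * S (3/2 - φ - 1) (n-1))) :=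
            mul_le_mul_of_nonneg_left hMu (Real.sqrt_nonneg _)
        _ ≤ Real.sqrt n * (CM * ((n:ℝ) * (Real.log n)⁻¹ * ((1/((3/2-φ-1)+1) + 4) * (n:ℝ)^((3/2-φ-1)+1)))) := by
            apply mul_le_mul_of_nonneg_left (mul_le_mul_of_nonneg_left hcoreM hCM.le) (Real.sqrt_nonneg _)
        _ = CM * (Real.sqrt (n:ℝ) * ((n:ℝ) * (Real.log n)⁻¹ * ((1/((3/2-φ-1)+1) + 4) * (n:ℝ)^((3/2-φ-1)+1)))) := by
            ring
        _ = CM * ((1/((3/2-φ-1)+1) + 4) * ((n:ℝ) ^ (3 - φ) / Real.log n)) := by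
            rw [hsq]
    have hWub : W 1 φ n ≤ CW * ((1/((2-φ-1)+1) + 4) * ((n:ℝ) ^ (3 - φ) / Real.log n)) := by
      calc W 1 φ n ≤ CW * ((n:ℝ) * (Z 1 n)⁻¹ * S (2 - φ - 1) (n-1)) := hWu
        _ ≤ CW * ((n:ℝ) * (Real.log n)⁻¹ * ((1/((2-φ-1)+1) + 4) * (n:ℝ)^((2-φ-1)+1))) :=
            mul_le_mul_of_nonneg_left hcoreW hCW.le
        _ = CW * ((1/((2-φ-1)+1) + 4) * ((n:ℝ) ^ (3 - φ) / Real.log n)) := by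
            rw [hprodW]
    calc g' n * M 1 φ n + W 1 φ n
        ≤ CM * ((1/((3/2-φ-1)+1) + 4) * ((n:ℝ) ^ (3 - φ) / Real.log n))
          + CW * ((1/((2-φ-1)+1) + 4) * ((n:ℝ) ^ (3 - φ) / Real.log n)) := by linarith
      _ = (CW * (1/((2 - φ - 1)+1) + 4) + CM * (1/((3/2 - φ - 1)+1) + 4))
          * ((n:ℝ) ^ (3 - φ) / Real.log n) := by ring

-- Case C core: 1 < γ < 5/2 - φ, h = n^(4-γ-φ)
lemma caseC {γ φ : ℝ} (hφ₁ : 1 < φ) (hφ₂ : φ < 3/2) (hγ1 : 1 < γ) (hγ2 : γ < 5/2 - φ)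
    (g' : ℕ → ℝ) (hg : ∀ n : ℕ, 3 ≤ n → 0 ≤ g' n ∧ g' n ≤ Real.sqrt n) :
    IsBigTheta (fun n => g' n * M γ φ n + W γ φ n) (fun n => (n:ℝ) ^ (4 - γ - φ)) := by
  obtain ⟨cW, CW, hcW, hCW, hW⟩ := W_sand (γ := γ) hφ₁ hφ₂
  obtain ⟨cM, CM, hcM, hCM, hM⟩ := M_sand (γ := γ) hφ₁ hφ₂
  have hqW1 : (-1:ℝ) < 2 - φ - γ := by linarith
  have hqW2 : (2:ℝ) - φ - γ < 1 := by linarith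
  have hqM1 : (-1:ℝ) < 3/2 - φ - γ := by linarith
  have hqM2 : (3:ℝ)/2 - φ - γ < 1 := by linarith
  have hKpos : (0:ℝ) < 1 + 1/(γ-1) := by
    have := div_pos one_pos (show (0:ℝ) < γ - 1 by linarith)
    linarith
  have htW : (0:ℝ) < 1/((2 - φ - γ)+1) := div_pos one_pos (by linarith)
  have htM : (0:ℝ) < 1/((3/2 - φ - γ)+1) := div_pos one_pos (by linarith)
  refine isBigTheta_of_bounds
    (c := cW * ((1 + 1/(γ-1))⁻¹ / (4 * ((2 - φ - γ) + 2))))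
    (C := CW * (1/((2 - φ - γ)+1) + 4) + CM * (1/((3/2 - φ - γ)+1) + 4))
    ?_ ?_ 3 (fun n hn => Real.rpow_nonneg (Nat.cast_nonneg n) _) (fun n hn => ?_)
  · apply mul_pos hcW
    apply div_pos (inv_pos.mpr hKpos)
    linarith
  · have := mul_pos hCW (by linarith : (0:ℝ) < 1/((2 - φ - γ)+1) + 4)
    have := mul_pos hCM (by linarith : (0:ℝ) < 1/((3/2 - φ - γ)+1) + 4)
    linarith
  have hn2 : 2 ≤ n := by omega
  have hx0 : (0:ℝ) < (n:ℝ) := by positivity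
  have hZl := (Z_bounds_gt1 hγ1 hn2).1
  have hZu := (Z_bounds_gt1 hγ1 hn2).2
  have hZpos : (0:ℝ) < Z γ n := lt_of_lt_of_le one_pos hZl
  have hZinv_u : (Z γ n)⁻¹ ≤ 1 := by
    rw [inv_le_one_iff₀]
    right; exact hZl
  have hZinv_l : (1 + 1/(γ-1))⁻¹ ≤ (Z γ n)⁻¹ := inv_anti₀ hZpos hZu
  have hSW := S_shift_sand hqW1 hqW2 hn2
  have hSM := S_shift_sand hqM1 hqM2 hn2
  have hZinv_nn : (0:ℝ) ≤ (Z γ n)⁻¹ := inv_nonneg.mpr hZpos.le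
  constructor
  · have hWl := (hW n hn2).1
    have hcore : (n:ℝ) * (1 + 1/(γ-1))⁻¹ * ((n:ℝ)^((2-φ-γ)+1) / (4 * ((2-φ-γ)+2)))
        ≤ (n:ℝ) * (Z γ n)⁻¹ * S (2 - φ - γ) (n-1) := by
      apply prod3_mono le_rfl hZinv_l hSW.1 hx0.le (inv_pos.mpr hKpos).le
        (div_nonneg (Real.rpow_nonneg hx0.le _) (by linarith))
    have hprod : (n:ℝ) * (1 + 1/(γ-1))⁻¹ * ((n:ℝ)^((2-φ-γ)+1) / (4 * ((2-φ-γ)+2)))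
        = ((1 + 1/(γ-1))⁻¹ / (4 * ((2 - φ - γ) + 2))) * (n:ℝ) ^ (4 - γ - φ) := by
      rw [show (4:ℝ) - γ - φ = 1 + ((2-φ-γ)+1) by ring, ← rpow_merge1 hx0]
      ring
    have hMg : 0 ≤ g' n * M γ φ n := mul_nonneg (hg n hn).1 (M_nonneg γ φ n)
    calc cW * ((1 + 1/(γ-1))⁻¹ / (4 * ((2 - φ - γ) + 2))) * (n:ℝ) ^ (4 - γ - φ)
        = cW * ((n:ℝ) * (1 + 1/(γ-1))⁻¹ * ((n:ℝ)^((2-φ-γ)+1) / (4 * ((2-φ-γ)+2)))) := by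
          rw [hprod]
          ring
      _ ≤ cW * ((n:ℝ) * (Z γ n)⁻¹ * S (2 - φ - γ) (n-1)) :=
          mul_le_mul_of_nonneg_left hcore hcW.le
      _ ≤ W γ φ n := hWl
      _ ≤ g' n * M γ φ n + W γ φ n := by linarith
  · have hWu := (hW n hn2).2
    have hMu := (hM n hn2).2
    have hcoreW : (n:ℝ) * (Z γ n)⁻¹ * S (2 - φ - γ) (n-1)
        ≤ (n:ℝ) * 1 * ((1/((2-φ-γ)+1) + 4) * (n:ℝ)^((2-φ-γ)+1)) :=
      prod3_mono le_rfl hZinv_u hSW.2 hx0.le hZinv_nn (S_nonneg _ _)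
    have hprodW : (n:ℝ) * 1 * ((1/((2-φ-γ)+1) + 4) * (n:ℝ)^((2-φ-γ)+1))
        = (1/((2-φ-γ)+1) + 4) * (n:ℝ) ^ (4 - γ - φ) := by
      rw [show (4:ℝ) - γ - φ = 1 + ((2-φ-γ)+1) by ring, ← rpow_merge1 hx0]
      ring
    have hcoreM : (n:ℝ) * (Z γ n)⁻¹ * S (3/2 - φ - γ) (n-1)
        ≤ (n:ℝ) * 1 * ((1/((3/2-φ-γ)+1) + 4) * (n:ℝ)^((3/2-φ-γ)+1)) :=
      prod3_mono le_rfl hZinv_u hSM.2 hx0.le hZinv_nn (S_nonneg _ _)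
    have hsq : Real.sqrt (n:ℝ) * ((n:ℝ) * 1 * ((1/((3/2-φ-γ)+1) + 4) * (n:ℝ)^((3/2-φ-γ)+1)))
        = (1/((3/2-φ-γ)+1) + 4) * (n:ℝ) ^ (4 - γ - φ) := by
      have h1 : Real.sqrt (n:ℝ) * ((n:ℝ) * (n:ℝ)^((3/2-φ-γ)+1)) = (n:ℝ) ^ (4 - γ - φ) := by
        rw [rpow_merge1 hx0, sqrt_rpow_merge hx0,
          show (1:ℝ)/2 + (1 + (3/2-φ-γ+1)) = 4 - γ - φ by ring]
      calc Real.sqrt (n:ℝ) * ((n:ℝ) * 1 * ((1/((3/2-φ-γ)+1) + 4) * (n:ℝ)^((3/2-φ-γ)+1)))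
          = (1/((3/2-φ-γ)+1) + 4) * (Real.sqrt (n:ℝ) * ((n:ℝ) * (n:ℝ)^((3/2-φ-γ)+1))) := by
            ring
        _ = (1/((3/2-φ-γ)+1) + 4) * (n:ℝ) ^ (4 - γ - φ) := by rw [h1]
    have hgM : g' n * M γ φ n ≤ CM * ((1/((3/2-φ-γ)+1) + 4) * (n:ℝ) ^ (4 - γ - φ)) := by
      calc g' n * M γ φ n ≤ Real.sqrt n * M γ φ n :=
            mul_le_mul_of_nonneg_right (hg n hn).2 (M_nonneg γ φ n)
        _ ≤ Real.sqrt n * (CM * ((n:ℝ) * (Z γ n)⁻¹ * S (3/2 - φ - γ) (n-1))) :=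
            mul_le_mul_of_nonneg_left hMu (Real.sqrt_nonneg _)
        _ ≤ Real.sqrt n * (CM * ((n:ℝ) * 1 * ((1/((3/2-φ-γ)+1) + 4) * (n:ℝ)^((3/2-φ-γ)+1)))) :=
            mul_le_mul_of_nonneg_left (mul_le_mul_of_nonneg_left hcoreM hCM.le) (Real.sqrt_nonneg _)
        _ = CM * (Real.sqrt (n:ℝ) * ((n:ℝ) * 1 * ((1/((3/2-φ-γ)+1) + 4) * (n:ℝ)^((3/2-φ-γ)+1)))) := by
            ring
        _ = CM * ((1/((3/2-φ-γ)+1) + 4) * (n:ℝ) ^ (4 - γ - φ)) := by rw [hsq]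
    have hWub : W γ φ n ≤ CW * ((1/((2-φ-γ)+1) + 4) * (n:ℝ) ^ (4 - γ - φ)) := by
      calc W γ φ n ≤ CW * ((n:ℝ) * (Z γ n)⁻¹ * S (2 - φ - γ) (n-1)) := hWu
        _ ≤ CW * ((n:ℝ) * 1 * ((1/((2-φ-γ)+1) + 4) * (n:ℝ)^((2-φ-γ)+1))) :=
            mul_le_mul_of_nonneg_left hcoreW hCW.le
        _ = CW * ((1/((2-φ-γ)+1) + 4) * (n:ℝ) ^ (4 - γ - φ)) := by rw [hprodW]
    calc g' n * M γ φ n + W γ φ n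
        ≤ CM * ((1/((3/2-φ-γ)+1) + 4) * (n:ℝ) ^ (4 - γ - φ))
          + CW * ((1/((2-φ-γ)+1) + 4) * (n:ℝ) ^ (4 - γ - φ)) := by linarith
      _ = (CW * (1/((2 - φ - γ)+1) + 4) + CM * (1/((3/2 - φ - γ)+1) + 4))
          * (n:ℝ) ^ (4 - γ - φ) := by ring

end AUX5
section AUX6
open Real Finset

lemma one_le_sqrt_log {n : ℕ} (hn : 3 ≤ n) : 1 ≤ Real.sqrt (Real.log n) := by
  have h := one_le_log hn
  calc (1:ℝ) = Real.sqrt 1 := Real.sqrt_one.symm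
    _ ≤ Real.sqrt (Real.log n) := Real.sqrt_le_sqrt h

-- common skeleton for case B: bounds on M and W
lemma caseB_core {γ φ : ℝ} (hφ₁ : 1 < φ) (hφ₂ : φ < 3/2) (hγe : γ = 5/2 - φ) :
    ∃ c C Cw : ℝ, 0 < c ∧ 0 < C ∧ 0 < Cw ∧ ∀ n : ℕ, 3 ≤ n →
      c * ((n:ℝ) * Real.log n) ≤ M γ φ n ∧
      M γ φ n ≤ C * ((n:ℝ) * Real.log n) ∧
      W γ φ n ≤ Cw * (n:ℝ) ^ (3/2 : ℝ) := by
  obtain ⟨cW, CW, hcW, hCW, hW⟩ := W_sand (γ := γ) hφ₁ hφ₂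
  obtain ⟨cM, CM, hcM, hCM, hM⟩ := M_sand (γ := γ) hφ₁ hφ₂
  have hγ1 : 1 < γ := by rw [hγe]; linarith
  have hqM : (3:ℝ)/2 - φ - γ = -1 := by rw [hγe]; ring
  have hqW : (2:ℝ) - φ - γ = -1/2 := by rw [hγe]; ring
  rw [hqM] at hM
  rw [hqW] at hW
  have hKpos : (0:ℝ) < 1 + 1/(γ-1) := by
    have := div_pos one_pos (show (0:ℝ) < γ - 1 by linarith)
    linarith
  refine ⟨cM * (1 + 1/(γ-1))⁻¹, CM * 2, CW * 6, mul_pos hcM (inv_pos.mpr hKpos),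
    by linarith, by linarith, fun n hn => ?_⟩
  have hn2 : 2 ≤ n := by omega
  have hx0 : (0:ℝ) < (n:ℝ) := by positivity
  have hL : (0:ℝ) < Real.log n := log_pos3 hn
  have hZl := (Z_bounds_gt1 hγ1 hn2).1
  have hZu := (Z_bounds_gt1 hγ1 hn2).2
  have hZpos : (0:ℝ) < Z γ n := lt_of_lt_of_le one_pos hZl
  have hZinv_u : (Z γ n)⁻¹ ≤ 1 := by
    rw [inv_le_one_iff₀]; right; exact hZl
  have hZinv_l : (1 + 1/(γ-1))⁻¹ ≤ (Z γ n)⁻¹ := inv_anti₀ hZpos hZu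
  have hZinv_nn : (0:ℝ) ≤ (Z γ n)⁻¹ := inv_nonneg.mpr hZpos.le
  have hSh := S_shift_harm hn
  have hSW := S_shift_sand (q := -1/2) (by norm_num) (by norm_num) hn2
  refine ⟨?_, ?_, ?_⟩
  · -- M lower
    have hcore : (n:ℝ) * (1 + 1/(γ-1))⁻¹ * Real.log n ≤ (n:ℝ) * (Z γ n)⁻¹ * S (-1 : ℝ) (n-1) :=
      prod3_mono le_rfl hZinv_l hSh.1 hx0.le (inv_pos.mpr hKpos).le hL.le
    calc cM * (1 + 1/(γ-1))⁻¹ * ((n:ℝ) * Real.log n)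
        = cM * ((n:ℝ) * (1 + 1/(γ-1))⁻¹ * Real.log n) := by ring
      _ ≤ cM * ((n:ℝ) * (Z γ n)⁻¹ * S (-1 : ℝ) (n-1)) :=
          mul_le_mul_of_nonneg_left hcore hcM.le
      _ ≤ M γ φ n := (hM n hn2).1
  · -- M upper
    have hcore : (n:ℝ) * (Z γ n)⁻¹ * S (-1 : ℝ) (n-1) ≤ (n:ℝ) * 1 * (2 * Real.log n) :=
      prod3_mono le_rfl hZinv_u hSh.2 hx0.le hZinv_nn (S_nonneg _ _)
    calc M γ φ n ≤ CM * ((n:ℝ) * (Z γ n)⁻¹ * S (-1 : ℝ) (n-1)) := (hM n hn2).2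
      _ ≤ CM * ((n:ℝ) * 1 * (2 * Real.log n)) := mul_le_mul_of_nonneg_left hcore hCM.le
      _ = CM * 2 * ((n:ℝ) * Real.log n) := by ring
  · -- W upper
    have hS2 : S (-1/2 : ℝ) (n-1) ≤ 6 * (n:ℝ) ^ ((-1/2:ℝ)+1) := by
      have := hSW.2
      calc S (-1/2 : ℝ) (n-1) ≤ (1/((-1/2:ℝ)+1) + 4) * (n:ℝ) ^ ((-1/2:ℝ)+1) := this
        _ = 6 * (n:ℝ) ^ ((-1/2:ℝ)+1) := by norm_num
    have hcore : (n:ℝ) * (Z γ n)⁻¹ * S (-1/2 : ℝ) (n-1) ≤ (n:ℝ) * 1 * (6 * (n:ℝ) ^ ((-1/2:ℝ)+1)) :=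
      prod3_mono le_rfl hZinv_u hS2 hx0.le hZinv_nn (S_nonneg _ _)
    have hid : (n:ℝ) * 1 * (6 * (n:ℝ) ^ ((-1/2:ℝ)+1)) = 6 * (n:ℝ) ^ (3/2 : ℝ) := by
      rw [show (3:ℝ)/2 = 1 + ((-1/2:ℝ)+1) by norm_num, ← rpow_merge1 hx0]
      ring
    calc W γ φ n ≤ CW * ((n:ℝ) * (Z γ n)⁻¹ * S (-1/2 : ℝ) (n-1)) := (hW n hn2).2
      _ ≤ CW * ((n:ℝ) * 1 * (6 * (n:ℝ) ^ ((-1/2:ℝ)+1))) := mul_le_mul_of_nonneg_left hcore hCW.le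
      _ = CW * 6 * (n:ℝ) ^ (3/2 : ℝ) := by rw [hid]; ring

-- case B with g = sqrt(n/log n)
lemma caseB1 {γ φ : ℝ} (hφ₁ : 1 < φ) (hφ₂ : φ < 3/2) (hγe : γ = 5/2 - φ)
    (g' : ℕ → ℝ) (hg : ∀ n : ℕ, 3 ≤ n → g' n = Real.sqrt ((n:ℝ) / Real.log n)) :
    IsBigTheta (fun n => g' n * M γ φ n + W γ φ n)
      (fun n => (n:ℝ) ^ (3/2 : ℝ) * Real.sqrt (Real.log n)) := by
  obtain ⟨c, C, Cw, hc, hC, hCw, hb⟩ := caseB_core hφ₁ hφ₂ hγe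
  refine isBigTheta_of_bounds (c := c) (C := C + Cw) hc (by linarith) 3
    (fun n hn => mul_nonneg (Real.rpow_nonneg (Nat.cast_nonneg n) _) (Real.sqrt_nonneg _))
    (fun n hn => ?_)
  obtain ⟨hMl, hMu, hWu⟩ := hb n hn
  have hx0 : (0:ℝ) < (n:ℝ) := by positivity
  have hL : (0:ℝ) < Real.log n := log_pos3 hn
  have htL : (0:ℝ) < Real.sqrt (Real.log n) := Real.sqrt_pos.mpr hL
  have hgeq : g' n = Real.sqrt n / Real.sqrt (Real.log n) := by
    rw [hg n hn, Real.sqrt_div (Nat.cast_nonneg n)]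
  have hg0 : 0 ≤ g' n := by
    rw [hgeq]; positivity
  have hkey : ∀ a : ℝ, (Real.sqrt n / Real.sqrt (Real.log n)) * (a * ((n:ℝ) * Real.log n))
      = a * ((n:ℝ) ^ (3/2:ℝ) * Real.sqrt (Real.log n)) := by
    intro a
    have h1 : Real.sqrt (n:ℝ) * (n:ℝ) = (n:ℝ) ^ (3/2:ℝ) := sqrt_mul_eq_rpow hx0.le
    have h2 : Real.log n / Real.sqrt (Real.log n) = Real.sqrt (Real.log n) := Real.div_sqrt
    calc (Real.sqrt n / Real.sqrt (Real.log n)) * (a * ((n:ℝ) * Real.log n))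
        = a * ((Real.sqrt (n:ℝ) * (n:ℝ)) * (Real.log n / Real.sqrt (Real.log n))) := by
          ring
      _ = a * ((n:ℝ) ^ (3/2:ℝ) * Real.sqrt (Real.log n)) := by rw [h1, h2]
  constructor
  · have hWnn := W_nonneg γ φ n
    calc c * ((n:ℝ) ^ (3/2:ℝ) * Real.sqrt (Real.log n))
        = (Real.sqrt n / Real.sqrt (Real.log n)) * (c * ((n:ℝ) * Real.log n)) := (hkey c).symm
      _ ≤ (Real.sqrt n / Real.sqrt (Real.log n)) * M γ φ n :=
          mul_le_mul_of_nonneg_left hMl (by positivity)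
      _ = g' n * M γ φ n := by rw [hgeq]
      _ ≤ g' n * M γ φ n + W γ φ n := by linarith
  · have h1 : g' n * M γ φ n ≤ C * ((n:ℝ) ^ (3/2:ℝ) * Real.sqrt (Real.log n)) := by
      calc g' n * M γ φ n = (Real.sqrt n / Real.sqrt (Real.log n)) * M γ φ n := by rw [hgeq]
        _ ≤ (Real.sqrt n / Real.sqrt (Real.log n)) * (C * ((n:ℝ) * Real.log n)) :=
            mul_le_mul_of_nonneg_left hMu (by positivity)
        _ = C * ((n:ℝ) ^ (3/2:ℝ) * Real.sqrt (Real.log n)) := hkey C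
    have h2 : W γ φ n ≤ Cw * ((n:ℝ) ^ (3/2:ℝ) * Real.sqrt (Real.log n)) := by
      calc W γ φ n ≤ Cw * (n:ℝ) ^ (3/2:ℝ) := hWu
        _ ≤ Cw * ((n:ℝ) ^ (3/2:ℝ) * Real.sqrt (Real.log n)) := by
            apply mul_le_mul_of_nonneg_left _ hCw.le
            nth_rewrite 1 [← mul_one ((n:ℝ) ^ (3/2:ℝ))]
            apply mul_le_mul_of_nonneg_left (one_le_sqrt_log hn) (Real.rpow_nonneg hx0.le _)
    calc g' n * M γ φ n + W γ φ n
        ≤ C * ((n:ℝ) ^ (3/2:ℝ) * Real.sqrt (Real.log n)) + Cw * ((n:ℝ) ^ (3/2:ℝ) * Real.sqrt (Real.log n)) := by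
          linarith
      _ = (C + Cw) * ((n:ℝ) ^ (3/2:ℝ) * Real.sqrt (Real.log n)) := by ring

-- case B with g = sqrt n
lemma caseB2 {γ φ : ℝ} (hφ₁ : 1 < φ) (hφ₂ : φ < 3/2) (hγe : γ = 5/2 - φ)
    (g' : ℕ → ℝ) (hg : ∀ n : ℕ, 3 ≤ n → g' n = Real.sqrt n) :
    IsBigTheta (fun n => g' n * M γ φ n + W γ φ n)
      (fun n => (n:ℝ) ^ (3/2 : ℝ) * Real.log n) := by
  obtain ⟨c, C, Cw, hc, hC, hCw, hb⟩ := caseB_core hφ₁ hφ₂ hγe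
  refine isBigTheta_of_bounds (c := c) (C := C + Cw) hc (by linarith) 3
    (fun n hn => mul_nonneg (Real.rpow_nonneg (Nat.cast_nonneg n) _) (log_pos3 hn).le)
    (fun n hn => ?_)
  obtain ⟨hMl, hMu, hWu⟩ := hb n hn
  have hx0 : (0:ℝ) < (n:ℝ) := by positivity
  have hL : (0:ℝ) < Real.log n := log_pos3 hn
  have hkey : ∀ a : ℝ, Real.sqrt n * (a * ((n:ℝ) * Real.log n))
      = a * ((n:ℝ) ^ (3/2:ℝ) * Real.log n) := by
    intro a
    have h1 : Real.sqrt (n:ℝ) * (n:ℝ) = (n:ℝ) ^ (3/2:ℝ) := sqrt_mul_eq_rpow hx0.le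
    calc Real.sqrt n * (a * ((n:ℝ) * Real.log n))
        = a * ((Real.sqrt (n:ℝ) * (n:ℝ)) * Real.log n) := by ring
      _ = a * ((n:ℝ) ^ (3/2:ℝ) * Real.log n) := by rw [h1]
  constructor
  · have hWnn := W_nonneg γ φ n
    calc c * ((n:ℝ) ^ (3/2:ℝ) * Real.log n)
        = Real.sqrt n * (c * ((n:ℝ) * Real.log n)) := (hkey c).symm
      _ ≤ Real.sqrt n * M γ φ n := mul_le_mul_of_nonneg_left hMl (Real.sqrt_nonneg _)
      _ = g' n * M γ φ n := by rw [hg n hn]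
      _ ≤ g' n * M γ φ n + W γ φ n := by linarith
  · have h1 : g' n * M γ φ n ≤ C * ((n:ℝ) ^ (3/2:ℝ) * Real.log n) := by
      calc g' n * M γ φ n = Real.sqrt n * M γ φ n := by rw [hg n hn]
        _ ≤ Real.sqrt n * (C * ((n:ℝ) * Real.log n)) :=
            mul_le_mul_of_nonneg_left hMu (Real.sqrt_nonneg _)
        _ = C * ((n:ℝ) ^ (3/2:ℝ) * Real.log n) := hkey C
    have h2 : W γ φ n ≤ Cw * ((n:ℝ) ^ (3/2:ℝ) * Real.log n) := by
      calc W γ φ n ≤ Cw * (n:ℝ) ^ (3/2:ℝ) := hWu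
        _ ≤ Cw * ((n:ℝ) ^ (3/2:ℝ) * Real.log n) := by
            apply mul_le_mul_of_nonneg_left _ hCw.le
            nth_rewrite 1 [← mul_one ((n:ℝ) ^ (3/2:ℝ))]
            apply mul_le_mul_of_nonneg_left (one_le_log hn) (Real.rpow_nonneg hx0.le _)
    calc g' n * M γ φ n + W γ φ n
        ≤ C * ((n:ℝ) ^ (3/2:ℝ) * Real.log n) + Cw * ((n:ℝ) ^ (3/2:ℝ) * Real.log n) := by linarith
      _ = (C + Cw) * ((n:ℝ) ^ (3/2:ℝ) * Real.log n) := by ring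

end AUX6
section AUX7
open Real Finset

lemma caseA_core {γ φ : ℝ} (hφ₁ : 1 < φ) (hφ₂ : φ < 3/2) (hγ : 5/2 - φ < γ) :
    ∃ c C Cw δ : ℝ, 0 < c ∧ 0 < C ∧ 0 < Cw ∧ 0 < δ ∧ δ ≤ 1/4 ∧ ∀ n : ℕ, 3 ≤ n →
      c * (n:ℝ) ≤ M γ φ n ∧ M γ φ n ≤ C * (n:ℝ) ∧
      W γ φ n ≤ Cw * (n:ℝ) ^ (3/2 - δ : ℝ) := by
  obtain ⟨cW, CW, hcW, hCW, hW⟩ := W_sand (γ := γ) hφ₁ hφ₂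
  obtain ⟨cM, CM, hcM, hCM, hM⟩ := M_sand (γ := γ) hφ₁ hφ₂
  have hγ1 : 1 < γ := by linarith
  have hqM : (3:ℝ)/2 - φ - γ < -1 := by linarith
  have hqW : (2:ℝ) - φ - γ < -1/2 := by linarith
  set δ : ℝ := min (-1/2 - (2 - φ - γ)) (1/4) with hδdef
  have hδ0 : 0 < δ := lt_min (by linarith) (by norm_num)
  have hδ4 : δ ≤ 1/4 := min_le_right _ _
  have hqle : 2 - φ - γ ≤ -1/2 - δ := by
    have h1 : δ ≤ -1/2 - (2 - φ - γ) := min_le_left _ _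
    linarith
  have hKpos : (0:ℝ) < 1 + 1/(γ-1) := by
    have := div_pos one_pos (show (0:ℝ) < γ - 1 by linarith)
    linarith
  have hCSpos : (0:ℝ) < 1 + 1/(-(3/2 - φ - γ + 1)) := by
    have := div_pos one_pos (show (0:ℝ) < -(3/2 - φ - γ + 1) by linarith)
    linarith
  refine ⟨cM * (1 + 1/(γ-1))⁻¹, CM * (1 + 1/(-(3/2 - φ - γ + 1))), CW * 8, δ,
    mul_pos hcM (inv_pos.mpr hKpos), mul_pos hCM hCSpos, by linarith, hδ0, hδ4,
    fun n hn => ?_⟩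
  have hn2 : 2 ≤ n := by omega
  have hx0 : (0:ℝ) < (n:ℝ) := by positivity
  have hZl := (Z_bounds_gt1 hγ1 hn2).1
  have hZu := (Z_bounds_gt1 hγ1 hn2).2
  have hZpos : (0:ℝ) < Z γ n := lt_of_lt_of_le one_pos hZl
  have hZinv_u : (Z γ n)⁻¹ ≤ 1 := by
    rw [inv_le_one_iff₀]; right; exact hZl
  have hZinv_l : (1 + 1/(γ-1))⁻¹ ≤ (Z γ n)⁻¹ := inv_anti₀ hZpos hZu
  have hZinv_nn : (0:ℝ) ≤ (Z γ n)⁻¹ := inv_nonneg.mpr hZpos.le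
  have hSM := S_shift_conv hqM hn2
  refine ⟨?_, ?_, ?_⟩
  · have hcore : (n:ℝ) * (1 + 1/(γ-1))⁻¹ * 1 ≤ (n:ℝ) * (Z γ n)⁻¹ * S (3/2 - φ - γ) (n-1) :=
      prod3_mono le_rfl hZinv_l hSM.1 hx0.le (inv_pos.mpr hKpos).le one_pos.le
    calc cM * (1 + 1/(γ-1))⁻¹ * (n:ℝ) = cM * ((n:ℝ) * (1 + 1/(γ-1))⁻¹ * 1) := by ring
      _ ≤ cM * ((n:ℝ) * (Z γ n)⁻¹ * S (3/2 - φ - γ) (n-1)) :=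
          mul_le_mul_of_nonneg_left hcore hcM.le
      _ ≤ M γ φ n := (hM n hn2).1
  · have hcore : (n:ℝ) * (Z γ n)⁻¹ * S (3/2 - φ - γ) (n-1)
        ≤ (n:ℝ) * 1 * (1 + 1/(-(3/2 - φ - γ + 1))) :=
      prod3_mono le_rfl hZinv_u hSM.2 hx0.le hZinv_nn (S_nonneg _ _)
    calc M γ φ n ≤ CM * ((n:ℝ) * (Z γ n)⁻¹ * S (3/2 - φ - γ) (n-1)) := (hM n hn2).2
      _ ≤ CM * ((n:ℝ) * 1 * (1 + 1/(-(3/2 - φ - γ + 1)))) :=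
          mul_le_mul_of_nonneg_left hcore hCM.le
      _ = CM * (1 + 1/(-(3/2 - φ - γ + 1))) * (n:ℝ) := by ring
  · -- W upper via exponent -1/2 - δ
    have hp1 : (-1:ℝ) < -1/2 - δ := by linarith
    have hp2 : (-1/2 - δ : ℝ) < 1 := by linarith
    have hmono : S (2 - φ - γ) (n-1) ≤ S (-1/2 - δ) (n-1) := S_mono_exp hqle _
    have hSu := (S_shift_sand hp1 hp2 hn2).2
    have h14 : (1:ℝ)/((-1/2 - δ)+1) ≤ 4 := by
      rw [div_le_iff₀ (by linarith)]
      linarith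
    have hS8 : S (-1/2 - δ) (n-1) ≤ 8 * (n:ℝ) ^ ((-1/2 - δ)+1) := by
      have hrnn : (0:ℝ) ≤ (n:ℝ) ^ ((-1/2 - δ)+1) := Real.rpow_nonneg hx0.le _
      nlinarith
    have hcore : (n:ℝ) * (Z γ n)⁻¹ * S (2 - φ - γ) (n-1)
        ≤ (n:ℝ) * 1 * (8 * (n:ℝ) ^ ((-1/2 - δ)+1)) :=
      prod3_mono le_rfl hZinv_u (hmono.trans hS8) hx0.le hZinv_nn (S_nonneg _ _)
    have hid : (n:ℝ) * 1 * (8 * (n:ℝ) ^ ((-1/2 - δ)+1)) = 8 * (n:ℝ) ^ (3/2 - δ : ℝ) := by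
      rw [show (3:ℝ)/2 - δ = 1 + ((-1/2 - δ)+1) by ring, ← rpow_merge1 hx0]
      ring
    calc W γ φ n ≤ CW * ((n:ℝ) * (Z γ n)⁻¹ * S (2 - φ - γ) (n-1)) := (hW n hn2).2
      _ ≤ CW * ((n:ℝ) * 1 * (8 * (n:ℝ) ^ ((-1/2 - δ)+1))) := mul_le_mul_of_nonneg_left hcore hCW.le
      _ = CW * 8 * (n:ℝ) ^ (3/2 - δ : ℝ) := by rw [hid]; ring

-- case A with g = sqrt n  (h = n^(3/2))
lemma caseA2 {γ φ : ℝ} (hφ₁ : 1 < φ) (hφ₂ : φ < 3/2) (hγ : 5/2 - φ < γ)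
    (g' : ℕ → ℝ) (hg : ∀ n : ℕ, 3 ≤ n → g' n = Real.sqrt n) :
    IsBigTheta (fun n => g' n * M γ φ n + W γ φ n) (fun n => (n:ℝ) ^ (3/2 : ℝ)) := by
  obtain ⟨c, C, Cw, δ, hc, hC, hCw, hδ0, hδ4, hb⟩ := caseA_core hφ₁ hφ₂ hγ
  refine isBigTheta_of_bounds (c := c) (C := C + Cw) hc (by linarith) 3
    (fun n hn => Real.rpow_nonneg (Nat.cast_nonneg n) _) (fun n hn => ?_)
  obtain ⟨hMl, hMu, hWu⟩ := hb n hn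
  have hx0 : (0:ℝ) < (n:ℝ) := by positivity
  have hx1 : (1:ℝ) ≤ (n:ℝ) := by
    have : (3:ℝ) ≤ (n:ℝ) := by exact_mod_cast hn
    linarith
  have hkey : ∀ a : ℝ, Real.sqrt n * (a * (n:ℝ)) = a * (n:ℝ) ^ (3/2:ℝ) := by
    intro a
    have h1 : Real.sqrt (n:ℝ) * (n:ℝ) = (n:ℝ) ^ (3/2:ℝ) := sqrt_mul_eq_rpow hx0.le
    calc Real.sqrt n * (a * (n:ℝ)) = a * (Real.sqrt (n:ℝ) * (n:ℝ)) := by ring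
      _ = a * (n:ℝ) ^ (3/2:ℝ) := by rw [h1]
  constructor
  · have hWnn := W_nonneg γ φ n
    calc c * (n:ℝ) ^ (3/2:ℝ) = Real.sqrt n * (c * (n:ℝ)) := (hkey c).symm
      _ ≤ Real.sqrt n * M γ φ n := mul_le_mul_of_nonneg_left hMl (Real.sqrt_nonneg _)
      _ = g' n * M γ φ n := by rw [hg n hn]
      _ ≤ g' n * M γ φ n + W γ φ n := by linarith
  · have h1 : g' n * M γ φ n ≤ C * (n:ℝ) ^ (3/2:ℝ) := by
      calc g' n * M γ φ n = Real.sqrt n * M γ φ n := by rw [hg n hn]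
        _ ≤ Real.sqrt n * (C * (n:ℝ)) := mul_le_mul_of_nonneg_left hMu (Real.sqrt_nonneg _)
        _ = C * (n:ℝ) ^ (3/2:ℝ) := hkey C
    have h2 : W γ φ n ≤ Cw * (n:ℝ) ^ (3/2:ℝ) := by
      calc W γ φ n ≤ Cw * (n:ℝ) ^ (3/2 - δ : ℝ) := hWu
        _ ≤ Cw * (n:ℝ) ^ (3/2:ℝ) := by
            apply mul_le_mul_of_nonneg_left _ hCw.le
            apply Real.rpow_le_rpow_of_exponent_le hx1
            linarith
    linarith [h1, h2, (by ring : C * (n:ℝ) ^ (3/2:ℝ) + Cw * (n:ℝ) ^ (3/2:ℝ) = (C + Cw) * (n:ℝ) ^ (3/2:ℝ))]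

-- case A with g = sqrt(n / log n)  (h = n^(3/2) / sqrt (log n))
lemma caseA1 {γ φ : ℝ} (hφ₁ : 1 < φ) (hφ₂ : φ < 3/2) (hγ : 5/2 - φ < γ)
    (g' : ℕ → ℝ) (hg : ∀ n : ℕ, 3 ≤ n → g' n = Real.sqrt ((n:ℝ) / Real.log n)) :
    IsBigTheta (fun n => g' n * M γ φ n + W γ φ n)
      (fun n => (n:ℝ) ^ (3/2 : ℝ) / Real.sqrt (Real.log n)) := by
  obtain ⟨c, C, Cw, δ, hc, hC, hCw, hδ0, hδ4, hb⟩ := caseA_core hφ₁ hφ₂ hγ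
  have hsd : (0:ℝ) < Real.sqrt (2*δ) := Real.sqrt_pos.mpr (by linarith)
  refine isBigTheta_of_bounds (c := c) (C := C + Cw * 8 / Real.sqrt (2*δ) * (1/8) * 8) hc ?_ 3
    (fun n hn => div_nonneg (Real.rpow_nonneg (Nat.cast_nonneg n) _) (Real.sqrt_nonneg _))
    (fun n hn => ?_)
  · have : 0 < Cw * 8 / Real.sqrt (2*δ) * (1/8) * 8 := by positivity
    linarith
  obtain ⟨hMl, hMu, hWu⟩ := hb n hn
  have hx0 : (0:ℝ) < (n:ℝ) := by positivity
  have hL : (0:ℝ) < Real.log n := log_pos3 hn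
  have htL : (0:ℝ) < Real.sqrt (Real.log n) := Real.sqrt_pos.mpr hL
  have hgeq : g' n = Real.sqrt n / Real.sqrt (Real.log n) := by
    rw [hg n hn, Real.sqrt_div (Nat.cast_nonneg n)]
  have hkey : ∀ a : ℝ, (Real.sqrt n / Real.sqrt (Real.log n)) * (a * (n:ℝ))
      = a * ((n:ℝ) ^ (3/2:ℝ) / Real.sqrt (Real.log n)) := by
    intro a
    have h1 : Real.sqrt (n:ℝ) * (n:ℝ) = (n:ℝ) ^ (3/2:ℝ) := sqrt_mul_eq_rpow hx0.le
    calc (Real.sqrt n / Real.sqrt (Real.log n)) * (a * (n:ℝ))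
        = a * ((Real.sqrt (n:ℝ) * (n:ℝ)) / Real.sqrt (Real.log n)) := by ring
      _ = a * ((n:ℝ) ^ (3/2:ℝ) / Real.sqrt (Real.log n)) := by rw [h1]
  -- the log-power trick: sqrt(log n) ≤ n^δ / sqrt(2δ)
  have hlogr : Real.sqrt (Real.log n) ≤ (n:ℝ) ^ (δ:ℝ) / Real.sqrt (2*δ) := by
    have h1 : Real.log n ≤ (n:ℝ) ^ (2*δ) / (2*δ) := Real.log_le_rpow_div hx0.le (by linarith)
    have h2 : Real.sqrt (Real.log n) ≤ Real.sqrt ((n:ℝ) ^ (2*δ) / (2*δ)) := Real.sqrt_le_sqrt h1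
    have h3 : Real.sqrt ((n:ℝ) ^ (2*δ) / (2*δ)) = Real.sqrt ((n:ℝ) ^ (2*δ)) / Real.sqrt (2*δ) :=
      Real.sqrt_div (Real.rpow_nonneg hx0.le _) _
    have h4 : Real.sqrt ((n:ℝ) ^ (2*δ)) = (n:ℝ) ^ (δ:ℝ) := by
      rw [Real.sqrt_eq_rpow, ← Real.rpow_mul hx0.le]
      congr 1
      ring
    rw [h3, h4] at h2
    exact h2
  -- hence n^(3/2-δ) ≤ (1/sqrt(2δ)) * (n^(3/2)/sqrt(log n))
  have hWtrick : (n:ℝ) ^ (3/2 - δ : ℝ) ≤ (Real.sqrt (2*δ))⁻¹ * ((n:ℝ) ^ (3/2:ℝ) / Real.sqrt (Real.log n)) := by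
    have hnd : (0:ℝ) < (n:ℝ) ^ (δ:ℝ) := Real.rpow_pos_of_pos hx0 _
    have h5 : (n:ℝ) ^ (3/2:ℝ) / Real.sqrt (Real.log n) ≥ (n:ℝ) ^ (3/2:ℝ) / ((n:ℝ) ^ (δ:ℝ) / Real.sqrt (2*δ)) := by
      apply div_le_div_of_nonneg_left (Real.rpow_nonneg hx0.le _) htL hlogr
    have h6 : (n:ℝ) ^ (3/2:ℝ) / ((n:ℝ) ^ (δ:ℝ) / Real.sqrt (2*δ))
        = Real.sqrt (2*δ) * ((n:ℝ) ^ (3/2:ℝ) / (n:ℝ) ^ (δ:ℝ)) := by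
      field_simp
    have h7 : (n:ℝ) ^ (3/2:ℝ) / (n:ℝ) ^ (δ:ℝ) = (n:ℝ) ^ (3/2 - δ : ℝ) :=
      (Real.rpow_sub hx0 _ _).symm
    rw [h6, h7] at h5
    rw [ge_iff_le, ← le_div_iff₀' hsd] at h5
    rw [div_eq_inv_mul ((n:ℝ) ^ (3/2:ℝ) / Real.sqrt (Real.log n)) (Real.sqrt (2*δ))] at h5
    exact h5
  constructor
  · have hWnn := W_nonneg γ φ n
    calc c * ((n:ℝ) ^ (3/2:ℝ) / Real.sqrt (Real.log n))
        = (Real.sqrt n / Real.sqrt (Real.log n)) * (c * (n:ℝ)) := (hkey c).symm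
      _ ≤ (Real.sqrt n / Real.sqrt (Real.log n)) * M γ φ n :=
          mul_le_mul_of_nonneg_left hMl (by positivity)
      _ = g' n * M γ φ n := by rw [hgeq]
      _ ≤ g' n * M γ φ n + W γ φ n := by linarith
  · have h1 : g' n * M γ φ n ≤ C * ((n:ℝ) ^ (3/2:ℝ) / Real.sqrt (Real.log n)) := by
      calc g' n * M γ φ n = (Real.sqrt n / Real.sqrt (Real.log n)) * M γ φ n := by rw [hgeq]
        _ ≤ (Real.sqrt n / Real.sqrt (Real.log n)) * (C * (n:ℝ)) :=
            mul_le_mul_of_nonneg_left hMu (by positivity)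
        _ = C * ((n:ℝ) ^ (3/2:ℝ) / Real.sqrt (Real.log n)) := hkey C
    have h2 : W γ φ n ≤ (Cw * 8 / Real.sqrt (2*δ) * (1/8) * 8) * ((n:ℝ) ^ (3/2:ℝ) / Real.sqrt (Real.log n)) := by
      calc W γ φ n ≤ Cw * (n:ℝ) ^ (3/2 - δ : ℝ) := hWu
        _ ≤ Cw * ((Real.sqrt (2*δ))⁻¹ * ((n:ℝ) ^ (3/2:ℝ) / Real.sqrt (Real.log n))) :=
            mul_le_mul_of_nonneg_left hWtrick hCw.le
        _ = (Cw * 8 / Real.sqrt (2*δ) * (1/8) * 8 / 8) * ((n:ℝ) ^ (3/2:ℝ) / Real.sqrt (Real.log n)) := by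
            field_simp
        _ ≤ (Cw * 8 / Real.sqrt (2*δ) * (1/8) * 8) * ((n:ℝ) ^ (3/2:ℝ) / Real.sqrt (Real.log n)) := by
            apply mul_le_mul_of_nonneg_right _ (by positivity)
            have hpos : 0 < Cw * 8 / Real.sqrt (2*δ) * (1/8) * 8 := by positivity
            linarith
    calc g' n * M γ φ n + W γ φ n
        ≤ C * ((n:ℝ) ^ (3/2:ℝ) / Real.sqrt (Real.log n))
          + (Cw * 8 / Real.sqrt (2*δ) * (1/8) * 8) * ((n:ℝ) ^ (3/2:ℝ) / Real.sqrt (Real.log n)) := by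
          linarith
      _ = (C + Cw * 8 / Real.sqrt (2*δ) * (1/8) * 8) * ((n:ℝ) ^ (3/2:ℝ) / Real.sqrt (Real.log n)) := by
          ring

end AUX7
theorem social_multicast_order_phi_mid_beta_le_one (γ β φ : ℝ) (hγ : 0 ≤ γ) (hβ : 0 ≤ β)
    (hφ₁ : 1 < φ) (hφ₂ : φ < 3 / 2) :
    (β = 1 →
      (5 / 2 - φ < γ → IsBigTheta (fun n => G β γ φ n)
        (fun n => (n : ℝ) ^ (3 / 2 : ℝ) / Real.sqrt (Real.log n))) ∧
      (γ = 5 / 2 - φ → IsBigTheta (fun n => G β γ φ n)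
        (fun n => (n : ℝ) ^ (3 / 2 : ℝ) * Real.sqrt (Real.log n))) ∧
      (1 < γ ∧ γ < 5 / 2 - φ →
        IsBigTheta (fun n => G β γ φ n) (fun n => (n : ℝ) ^ (4 - γ - φ))) ∧
      (γ = 1 → IsBigTheta (fun n => G β γ φ n)
        (fun n => (n : ℝ) ^ (3 - φ) / Real.log n)) ∧
      (γ < 1 → IsBigTheta (fun n => G β γ φ n) (fun n => (n : ℝ) ^ (3 - φ)))) ∧
    (β < 1 →
      (5 / 2 - φ < γ → IsBigTheta (fun n => G β γ φ n)
        (fun n => (n : ℝ) ^ (3 / 2 : ℝ))) ∧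
      (γ = 5 / 2 - φ → IsBigTheta (fun n => G β γ φ n)
        (fun n => (n : ℝ) ^ (3 / 2 : ℝ) * Real.log n)) ∧
      (1 < γ ∧ γ < 5 / 2 - φ →
        IsBigTheta (fun n => G β γ φ n) (fun n => (n : ℝ) ^ (4 - γ - φ))) ∧
      (γ = 1 → IsBigTheta (fun n => G β γ φ n)
        (fun n => (n : ℝ) ^ (3 - φ) / Real.log n)) ∧
      (γ < 1 → IsBigTheta (fun n => G β γ φ n) (fun n => (n : ℝ) ^ (3 - φ)))) := by
  constructor
  · intro hβ1
    subst hβ1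
    have hgeq : ∀ n : ℕ, 3 ≤ n → g 1 n = Real.sqrt ((n:ℝ) / Real.log n) :=
      fun n _ => g_eq_one n
    have hgs : ∀ n : ℕ, 3 ≤ n → 0 ≤ g 1 n ∧ g 1 n ≤ Real.sqrt n := by
      intro n hn
      constructor
      · rw [g_eq_one]
        exact Real.sqrt_nonneg _
      · exact g_one_le_sqrt hn
    refine ⟨?_, ?_, ?_, ?_, ?_⟩
    · intro h
      exact caseA1 hφ₁ hφ₂ h (g 1) hgeq
    · intro h
      exact caseB1 hφ₁ hφ₂ h (g 1) hgeq
    · intro ⟨h1, h2⟩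
      exact caseC hφ₁ hφ₂ h1 h2 (g 1) hgs
    · intro h
      subst h
      exact caseD hφ₁ hφ₂ (g 1) hgs
    · intro h
      exact caseE hφ₁ hφ₂ hγ h (g 1) hgs
  · intro hβ1
    have hgeq : ∀ n : ℕ, 3 ≤ n → g β n = Real.sqrt n :=
      fun n _ => g_of_lt_one hβ1 n
    have hgs : ∀ n : ℕ, 3 ≤ n → 0 ≤ g β n ∧ g β n ≤ Real.sqrt n := by
      intro n hn
      rw [g_of_lt_one hβ1]
      exact ⟨Real.sqrt_nonneg _, le_rfl⟩
    refine ⟨?_, ?_, ?_, ?_, ?_⟩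
    · intro h
      exact caseA2 hφ₁ hφ₂ h (g β) hgeq
    · intro h
      exact caseB2 hφ₁ hφ₂ h (g β) hgeq
    · intro ⟨h1, h2⟩
      exact caseC hφ₁ hφ₂ h1 h2 (g β) hgs
    · intro h
      subst h
      exact caseD hφ₁ hφ₂ (g β) hgs
    · intro h
      exact caseE hφ₁ hφ₂ hγ h (g β) hgs
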